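/- arXiv:1807.09452 — 6 statements merged into one kernel-verified Lean document; each statement's English description precedes it below -/
import Mathlib

section
/- Let L be a non-degenerate even lattice of rank n and p an odd prime such that the Sylow p-subgroup of G(L) = L*/L is isomorphic to 𝔽_p^n. Then the rescaled form L(1/p), i.e. the same ℤ-module L with bilinear form (x,y)_{L(1/p)} = (1/p)(x,y)_L, is a well-defined non-degenerate even lattice (in particular (1/p)(x,y) ∈ ℤ for all x,y ∈ L and (1/p)(x,x) ∈ 2ℤ for all x ∈ L). -/
/-- The dual lattice `L* = {x ∈ L ⊗ ℚ : (x,y) ∈ ℤ for all y ∈ L}` of a lattice `L`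
inside a rational quadratic space `(V, B)`. -/
def dualLattice {V : Type*} [AddCommGroup V] [Module ℚ V]
    (B : V →ₗ[ℚ] V →ₗ[ℚ] ℚ) (L : Submodule ℤ V) : Submodule ℤ V where
  carrier := {x : V | ∀ y ∈ L, ∃ n : ℤ, B x y = n}
  add_mem' := by
    intro a b ha hb y hy
    obtain ⟨m, hm⟩ := ha y hy
    obtain ⟨n, hn⟩ := hb y hy
    exact ⟨m + n, by simp [hm, hn]⟩
  zero_mem' := fun y hy => ⟨0, by simp⟩
  smul_mem' := by
    intro c x hx y hy
    obtain ⟨m, hm⟩ := hx y hy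
    refine ⟨c * m, ?_⟩
    rw [map_zsmul, LinearMap.smul_apply, hm, zsmul_eq_mul]
    push_cast
    ring

/-- The `p`-primary part (Sylow `p`-subgroup) of a submodule `N` of a `ℤ`-module `M`. -/
def pPrimary {M : Type*} [AddCommGroup M] (p : ℕ) (N : Submodule ℤ M) : Submodule ℤ M where
  carrier := {x : M | x ∈ N ∧ ∃ k : ℕ, ((p : ℤ) ^ k) • x = 0}
  add_mem' := by
    rintro a b ⟨haN, k, hk⟩ ⟨hbN, l, hl⟩
    refine ⟨N.add_mem haN hbN, k + l, ?_⟩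
    have h1 : ((p : ℤ) ^ (k + l)) • a = 0 := by
      rw [pow_add, mul_comm, mul_smul, hk, smul_zero]
    have h2 : ((p : ℤ) ^ (k + l)) • b = 0 := by
      rw [pow_add, mul_smul, hl, smul_zero]
    rw [smul_add, h1, h2, add_zero]
  zero_mem' := ⟨N.zero_mem, 0, smul_zero _⟩
  smul_mem' := by
    rintro c x ⟨hxN, k, hk⟩
    exact ⟨N.smul_mem c hxN, k, by rw [smul_comm, hk, smul_zero]⟩

/-- Let `L` be a non-degenerate even lattice of rank `n` in a rational
quadratic space `(V, B)` and `p` an odd prime such that the Sylow `p`-subgroup of the glue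
group `G(L) = L*/L` is isomorphic to `𝔽_p^n`.  Then the rescaled form `L(1/p)`, with bilinear
form `(x,y) ↦ (1/p)·B x y`, is a well-defined non-degenerate even lattice: it is `ℤ`-valued
and even on `L`, and non-degenerate. -/
theorem stmt1 {V : Type*} [AddCommGroup V] [Module ℚ V]
    (B : V →ₗ[ℚ] V →ₗ[ℚ] ℚ) (L : Submodule ℤ V) (n : ℕ)
    (basis : Module.Basis (Fin n) ℤ L)
    (hfull : Submodule.span ℚ (L : Set V) = ⊤)
    (hsymm : ∀ x y : V, B x y = B y x)
    (hint : ∀ x ∈ L, ∀ y ∈ L, ∃ m : ℤ, B x y = m)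
    (heven : ∀ x ∈ L, ∃ m : ℤ, B x x = 2 * m)
    (hnd : ∀ x : V, (∀ y : V, B x y = 0) → x = 0)
    (p : ℕ) (hp : p.Prime) (hodd : p ≠ 2)
    (hSyl : Nonempty
      ((pPrimary p (Submodule.map L.mkQ (dualLattice B L))) ≃+ (Fin n → ZMod p))) :
    (∀ x ∈ L, ∀ y ∈ L, ∃ m : ℤ, (p : ℚ)⁻¹ * B x y = m) ∧
    (∀ x ∈ L, ∃ m : ℤ, (p : ℚ)⁻¹ * B x x = 2 * m) ∧
    (∀ x : V, (∀ y : V, (p : ℚ)⁻¹ * B x y = 0) → x = 0) := by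
  classical
  obtain ⟨e⟩ := hSyl
  haveI : NeZero p := ⟨hp.ne_zero⟩
  have hpQ : (p : ℚ) ≠ 0 := Nat.cast_ne_zero.mpr hp.ne_zero
  set D := dualLattice B L with hDdef
  set A := pPrimary p (Submodule.map L.mkQ D) with hAdef
  have memD : ∀ x : V, x ∈ D ↔ ∀ y ∈ L, ∃ m : ℤ, B x y = m := fun x => Iff.rfl
  have hLD : L ≤ D := fun x hx => (memD x).mpr (fun y hy => hint x hx y hy)
  set N : Submodule ℤ V := D ⊓ (L.comap ((p:ℤ) • (LinearMap.id : V →ₗ[ℤ] V))) with hNdef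
  have memN : ∀ x : V, x ∈ N ↔ x ∈ D ∧ (p:ℤ) • x ∈ L := by
    intro x
    simp [hNdef, Submodule.mem_inf, Submodule.mem_comap]
  have hLN : L ≤ N := by
    intro x hx
    rw [memN]
    exact ⟨hLD hx, L.smul_mem _ hx⟩
  have hcancel : ∀ x y : V, (p:ℤ) • x = (p:ℤ) • y → x = y := by
    intro x y h
    have hpz : ((p:ℤ) : ℚ) ≠ 0 := by exact_mod_cast hpQ
    have h' : ((p:ℤ):ℚ) • x = ((p:ℤ):ℚ) • y := by
      rw [Int.cast_smul_eq_zsmul, Int.cast_smul_eq_zsmul]; exact h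
    have h2 := congrArg (fun v => (((p:ℤ):ℚ))⁻¹ • v) h'
    simpa [smul_smul, inv_mul_cancel₀ hpz] using h2
  -- every element of the Sylow subgroup is killed by p
  have hκ : ∀ v : Fin n → ZMod p, (p:ℤ) • v = 0 := by
    intro v; funext i
    simp only [Pi.smul_apply, Pi.zero_apply, zsmul_eq_mul]
    have : ((p:ℤ) : ZMod p) = 0 := by
      push_cast
      exact ZMod.natCast_self p
    rw [this, zero_mul]
  have expA : ∀ a : A, (p:ℤ) • a = 0 := by
    intro a
    apply e.injective
    rw [map_zsmul, map_zero]
    exact hκ _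
  have hNA : ∀ x : V, x ∈ N → L.mkQ x ∈ A := by
    intro x hx
    rw [memN] at hx
    refine ⟨Submodule.mem_map_of_mem hx.1, 1, ?_⟩
    rw [pow_one, ← map_zsmul]
    rw [Submodule.mkQ_apply, Submodule.Quotient.mk_eq_zero]
    exact hx.2
  have hAN : ∀ a : A, ∃ x, x ∈ N ∧ L.mkQ x = (a : V ⧸ L) := by
    intro a
    obtain ⟨⟨x, hxD, hxq⟩, -⟩ := a.2
    have hpa : (p:ℤ) • (a : V ⧸ L) = 0 := by
      have := congrArg Subtype.val (expA a)
      simpa using this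
    refine ⟨x, ?_, hxq⟩
    rw [memN]
    refine ⟨hxD, ?_⟩
    have h0 : L.mkQ ((p:ℤ) • x) = 0 := by rw [map_zsmul, hxq, hpa]
    rw [Submodule.mkQ_apply, Submodule.Quotient.mk_eq_zero] at h0
    exact h0
  let m1 : N →ₗ[ℤ] A := LinearMap.codRestrict A (L.mkQ.comp N.subtype) (fun x => hNA x.1 x.2)
  have m1surj : Function.Surjective m1 := by
    intro a
    obtain ⟨x, hxN, hx⟩ := hAN a
    exact ⟨⟨x, hxN⟩, Subtype.ext hx⟩
  have m1ker : LinearMap.ker m1 = L.comap N.subtype := by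
    ext x
    simp only [LinearMap.mem_ker, Submodule.mem_comap, Submodule.subtype_apply]
    rw [← Submodule.Quotient.mk_eq_zero, ← Submodule.mkQ_apply]
    exact ⟨fun h => congrArg Subtype.val h, fun h => Subtype.ext h⟩
  have hNpL : ∀ x : V, x ∈ N → (p:ℤ) • x ∈ L := fun x hx => ((memN x).mp hx).2
  let toL : N →ₗ[ℤ] L :=
    { toFun := fun x => ⟨(p:ℤ) • (x:V), hNpL x.1 x.2⟩
      map_add' := fun a b => Subtype.ext (smul_add _ _ _)
      map_smul' := fun c a => Subtype.ext (smul_comm (p:ℤ) c (a:V)) }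
  let red : (Fin n → ℤ) →ₗ[ℤ] (Fin n → ZMod p) :=
    LinearMap.pi (fun i => (Int.castAddHom (ZMod p)).toIntLinearMap.comp (LinearMap.proj i))
  let ψ : N →ₗ[ℤ] (Fin n → ZMod p) :=
    red.comp ((basis.equivFun.toLinearMap).comp toL)
  have ψapply : ∀ x : N, ∀ i, ψ x i = ((basis.equivFun (toL x) i : ℤ) : ZMod p) :=
    fun x i => rfl
  have ψker : ∀ x : N, ψ x = 0 ↔ (x : V) ∈ L := by
    intro x
    constructor
    · intro h
      have hdvd : ∀ i, (p:ℤ) ∣ basis.equivFun (toL x) i := by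
        intro i
        have h1 := congrFun h i
        rw [ψapply] at h1
        exact_mod_cast (ZMod.intCast_zmod_eq_zero_iff_dvd _ p).mp h1
      choose d hd using hdvd
      have heq : toL x = (p:ℤ) • basis.equivFun.symm d := by
        apply basis.equivFun.injective
        rw [map_smul, LinearEquiv.apply_symm_apply]
        funext i
        rw [Pi.smul_apply, smul_eq_mul]
        exact (hd i).symm ▸ (hd i)
      have hcv : (p:ℤ) • (x : V) = (p:ℤ) • ((basis.equivFun.symm d : L) : V) := by
        have h3 := congrArg Subtype.val heq
        have h4 : ((toL x : L) : V) = (p:ℤ) • (x:V) := rfl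
        rw [h4] at h3
        simpa using h3
      have := hcancel _ _ hcv
      rw [this]
      exact (basis.equivFun.symm d).2
    · intro hxL
      funext i
      rw [ψapply]
      have heq : toL x = (p:ℤ) • (⟨(x:V), hxL⟩ : L) := Subtype.ext rfl
      rw [heq, map_smul, Pi.smul_apply, smul_eq_mul]
      push_cast
      rw [ZMod.natCast_self, zero_mul]
      rfl
  set K := L.comap N.subtype with hKdef
  have hKker : K ≤ LinearMap.ker ψ := by
    intro x hx
    rw [LinearMap.mem_ker, ψker]
    exact hx
  let ψq := K.liftQ ψ hKker
  have ψqinj : Function.Injective ψq := by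
    rw [← LinearMap.ker_eq_bot]
    exact Submodule.ker_liftQ_eq_bot K ψ hKker
      (by intro x hx; rw [LinearMap.mem_ker, ψker] at hx; exact hx)
  have eq1 : (N ⧸ K) ≃ₗ[ℤ] A :=
    (Submodule.quotEquivOfEq K (LinearMap.ker m1) m1ker.symm).trans
      (LinearMap.quotKerEquivOfSurjective m1 m1surj)
  haveI : Finite A := Finite.of_equiv _ e.toEquiv.symm
  haveI : Finite (N ⧸ K) := Finite.of_equiv _ eq1.symm.toEquiv
  haveI : Fintype (N ⧸ K) := Fintype.ofFinite _
  have hcards : Fintype.card (N ⧸ K) = Fintype.card (Fin n → ZMod p) := by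
    rw [← Nat.card_eq_fintype_card, ← Nat.card_eq_fintype_card,
      Nat.card_congr eq1.toEquiv, Nat.card_congr e.toEquiv]
  have ψqsurj : Function.Surjective ψq :=
    ((Fintype.bijective_iff_injective_and_card ψq).mpr ⟨ψqinj, hcards⟩).surjective
  have ψsurj : Function.Surjective ψ := by
    intro v
    obtain ⟨q, hq⟩ := ψqsurj v
    obtain ⟨x, rfl⟩ := Submodule.mkQ_surjective K q
    refine ⟨x, ?_⟩
    rw [← hq]
    rfl
  -- key divisibility: every element of L is p times an element of the dual lattice
  have key : ∀ y ∈ L, ∃ x ∈ D, y = (p:ℤ) • x := by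
    intro y hy
    obtain ⟨x, hx⟩ := ψsurj (fun i => ((basis.equivFun ⟨y, hy⟩ i : ℤ) : ZMod p))
    have hdvd : ∀ i, (p:ℤ) ∣ (basis.equivFun (⟨y, hy⟩ : L) i - basis.equivFun (toL x) i) := by
      intro i
      have h1 := congrFun hx i
      rw [ψapply] at h1
      have h2 : (((basis.equivFun (⟨y, hy⟩ : L) i - basis.equivFun (toL x) i : ℤ)) : ZMod p) = 0 := by
        push_cast
        rw [← h1]
        ring
      exact_mod_cast (ZMod.intCast_zmod_eq_zero_iff_dvd _ p).mp h2
    choose d hd using hdvd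
    have hyl : (⟨y, hy⟩ : L) = toL x + (p:ℤ) • basis.equivFun.symm d := by
      apply basis.equivFun.injective
      rw [map_add, map_smul, LinearEquiv.apply_symm_apply]
      funext i
      rw [Pi.add_apply, Pi.smul_apply, smul_eq_mul]
      have := hd i
      omega
    refine ⟨(x : V) + ((basis.equivFun.symm d : L) : V), ?_, ?_⟩
    · exact D.add_mem ((memN _).mp x.2).1 (hLD (basis.equivFun.symm d).2)
    · have hcv := congrArg Subtype.val hyl
      have h4 : ((toL x : L) : V) = (p:ℤ) • (x:V) := rfl
      simp only [Submodule.coe_add, SetLike.val_smul, h4] at hcv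
      rw [smul_add]
      exact hcv
  have part1 : ∀ x ∈ L, ∀ y ∈ L, ∃ m : ℤ, (p:ℚ)⁻¹ * B x y = m := by
    intro x hx y hy
    obtain ⟨w, hwD, rfl⟩ := key x hx
    obtain ⟨m, hm⟩ := (memD w).mp hwD y hy
    refine ⟨m, ?_⟩
    have hB : B ((p:ℤ) • w) y = (p:ℚ) * B w y := by
      rw [← Int.cast_smul_eq_zsmul ℚ, map_smul, LinearMap.smul_apply, smul_eq_mul]
      push_cast
      ring
    rw [hB, hm, ← mul_assoc, inv_mul_cancel₀ hpQ, one_mul]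
  have part2 : ∀ x ∈ L, ∃ m : ℤ, (p:ℚ)⁻¹ * B x x = 2 * m := by
    intro x hx
    obtain ⟨m, hm⟩ := part1 x hx x hx
    obtain ⟨m', hm'⟩ := heven x hx
    have hq : (p:ℚ) * m = 2 * m' := by
      rw [← hm', ← hm, ← mul_assoc, mul_inv_cancel₀ hpQ, one_mul]
    have hpm : (p:ℤ) * m = 2 * m' := by exact_mod_cast hq
    have hnd2 : ¬ (2:ℤ) ∣ (p:ℤ) := by
      intro hdv
      have : (2:ℕ) ∣ p := by exact_mod_cast hdv
      exact hodd ((Nat.prime_dvd_prime_iff_eq Nat.prime_two hp).mp this).symm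
    have h2 : (2:ℤ) ∣ m := by
      have h2pm : (2:ℤ) ∣ (p:ℤ) * m := ⟨m', hpm⟩
      exact ((Int.prime_two.dvd_mul).mp h2pm).resolve_left hnd2
    obtain ⟨k, rfl⟩ := h2
    exact ⟨k, by rw [hm]; push_cast; ring⟩
  have part3 : ∀ x : V, (∀ y : V, (p : ℚ)⁻¹ * B x y = 0) → x = 0 := by
    intro x h
    apply hnd
    intro y
    rcases mul_eq_zero.mp (h y) with h' | h'
    · exact absurd (inv_eq_zero.mp h') hpQ
    · exact h'
  exact ⟨part1, part2, part3⟩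
end

section
/- Let L be a non-degenerate even lattice of rank n such that the Sylow 2-subgroup of G(L) = L*/L is isomorphic to 𝔽_2^n and such that the induced bilinear form b_L on G(L) satisfies b_L(x,x) = 0 in ℚ/ℤ for all x in the Sylow 2-subgroup. Then L(1/2) (the module L with form halved) is a well-defined non-degenerate even lattice. -/
/-- Let `L` be a non-degenerate even lattice of rank `n` whose Sylow
`2`-subgroup of `G(L) = L*/L` is isomorphic to `𝔽_2^n`, and such that the induced bilinear
form `b_L` satisfies `b_L(x,x) = 0` in `ℚ/ℤ` for all `x` in the Sylow `2`-subgroup (i.e.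
`B x x ∈ ℤ` for every `x ∈ L*` with `2x ∈ L`).  Then `L(1/2)` is a well-defined
non-degenerate even lattice. -/
theorem stmt2 {V : Type*} [AddCommGroup V] [Module ℚ V]
    (B : V →ₗ[ℚ] V →ₗ[ℚ] ℚ) (L : Submodule ℤ V) (n : ℕ)
    (basis : Module.Basis (Fin n) ℤ L)
    (hfull : Submodule.span ℚ (L : Set V) = ⊤)
    (hsymm : ∀ x y : V, B x y = B y x)
    (hint : ∀ x ∈ L, ∀ y ∈ L, ∃ m : ℤ, B x y = m)
    (heven : ∀ x ∈ L, ∃ m : ℤ, B x x = 2 * m)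
    (hnd : ∀ x : V, (∀ y : V, B x y = 0) → x = 0)
    (hSyl : Nonempty
      ((pPrimary 2 (Submodule.map L.mkQ (dualLattice B L))) ≃+ (Fin n → ZMod 2)))
    (hbzero : ∀ x ∈ dualLattice B L, (2 : ℤ) • x ∈ L → ∃ m : ℤ, B x x = m) :
    (∀ x ∈ L, ∀ y ∈ L, ∃ m : ℤ, (2 : ℚ)⁻¹ * B x y = m) ∧
    (∀ x ∈ L, ∃ m : ℤ, (2 : ℚ)⁻¹ * B x x = 2 * m) ∧
    (∀ x : V, (∀ y : V, (2 : ℚ)⁻¹ * B x y = 0) → x = 0) := by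
  classical
  set e : Fin n → V := fun i => (basis i : V) with he_def
  have he : ∀ i, e i ∈ L := fun i => (basis i).2
  have hAex : ∀ i j, ∃ m : ℤ, B (e i) (e j) = m := fun i j => hint _ (he i) _ (he j)
  choose A hA using hAex
  have hAsymm : ∀ i j, A i j = A j i := by
    intro i j
    have h := hsymm (e i) (e j)
    rw [hA, hA] at h
    exact_mod_cast h
  -- every element of L is a ℚ-combination of the basis vectors
  have hrepr : ∀ x (hx : x ∈ L), x = ∑ j, ((basis.repr ⟨x, hx⟩ j : ℚ)) • e j := by
    intro x hx
    calc x = (L.subtype ⟨x, hx⟩ : V) := rfl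
      _ = L.subtype (∑ j, basis.repr ⟨x, hx⟩ j • basis j) := by rw [basis.sum_repr]
      _ = ∑ j, basis.repr ⟨x, hx⟩ j • e j := by rw [map_sum]; rfl
      _ = ∑ j, ((basis.repr ⟨x, hx⟩ j : ℚ)) • e j := by
          exact Finset.sum_congr rfl fun j _ => (Int.cast_smul_eq_zsmul ℚ _ _).symm
  -- bilinear expansions
  have hB1 : ∀ (c : Fin n → ℚ) (y : V), B (∑ j, c j • e j) y = ∑ j, c j * B (e j) y := by
    intro c y
    simp [map_sum, LinearMap.sum_apply]
  have hB2 : ∀ (x : V) (c : Fin n → ℚ), B x (∑ j, c j • e j) = ∑ j, c j * B x (e j) := by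
    intro x c
    simp [map_sum, map_smul]
  have hdual_of : ∀ x : V, (∀ i, ∃ m : ℤ, B x (e i) = m) → x ∈ dualLattice B L := by
    intro x hx
    choose m hm using hx
    intro y hy
    rw [hrepr y hy, hB2]
    refine ⟨∑ j, basis.repr ⟨y, hy⟩ j * m j, ?_⟩
    push_cast
    exact Finset.sum_congr rfl fun j _ => by rw [hm]
  obtain ⟨ee⟩ := hSyl
  -- the 2-primary part is 2-torsion
  have htors : ∀ p : (pPrimary 2 (Submodule.map L.mkQ (dualLattice B L))),
      (2 : ℤ) • p = 0 := by
    intro p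
    apply ee.injective
    rw [map_zsmul, map_zero]
    funext i
    show (2 : ℤ) • (ee p) i = 0
    rw [two_zsmul]
    revert i
    intro i
    generalize (ee p) i = a
    revert a; decide
  -- lift of a mod-2 vector
  set w : (Fin n → ZMod 2) → Fin n → ℤ := fun v j => ((v j).val : ℤ) with hw_def
  have hw2 : ∀ v j, ((w v j : ℤ) : ZMod 2) = v j := by
    intro v j
    simp [hw_def]
  set X : (Fin n → ZMod 2) → V := fun v => (2:ℚ)⁻¹ • ∑ j, ((w v j : ℚ)) • e j with hX_def
  have hX2 : ∀ v, (2:ℤ) • X v = ∑ j, (w v j) • e j := by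
    intro v
    rw [hX_def]
    rw [← Int.cast_smul_eq_zsmul ℚ, smul_smul]
    norm_num
    exact Finset.sum_congr rfl fun j _ => (Int.cast_smul_eq_zsmul ℚ _ _)
  have hXL : ∀ v, (2:ℤ) • X v ∈ L := by
    intro v
    rw [hX2]
    exact Submodule.sum_mem _ fun j _ => L.smul_mem _ (he j)
  have hBX : ∀ v i, B (X v) (e i) = (2:ℚ)⁻¹ * ∑ j, (w v j : ℚ) * (A j i : ℚ) := by
    intro v i
    rw [hX_def]
    simp only [map_smul, LinearMap.smul_apply, smul_eq_mul]
    rw [hB1]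
    congr 1
    exact Finset.sum_congr rfl fun j _ => by rw [hA]
  set S : Set (Fin n → ZMod 2) := {v | ∀ i, ∑ j, ((A i j : ZMod 2)) * v j = 0} with hS_def
  have hXdual : ∀ v ∈ S, X v ∈ dualLattice B L := by
    intro v hv
    apply hdual_of
    intro i
    have hcast : ((∑ j, w v j * A j i : ℤ) : ZMod 2) = 0 := by
      push_cast
      rw [← hv i]
      exact Finset.sum_congr rfl fun j _ => by rw [hw2, hAsymm i j, mul_comm]
    obtain ⟨m, hm⟩ := (ZMod.intCast_zmod_eq_zero_iff_dvd _ 2).1 hcast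
    refine ⟨m, ?_⟩
    rw [hBX]
    have : ∑ j, (w v j : ℚ) * (A j i : ℚ) = ((∑ j, w v j * A j i : ℤ) : ℚ) := by push_cast; ring
    rw [this, hm]
    push_cast
    ring
  -- the map from S to the 2-primary part
  have hFmem : ∀ v ∈ S, L.mkQ (X v) ∈ pPrimary 2 (Submodule.map L.mkQ (dualLattice B L)) := by
    intro v hv
    refine ⟨Submodule.mem_map_of_mem (hXdual v hv), 1, ?_⟩
    have : (((2:ℕ) : ℤ) ^ 1) • L.mkQ (X v) = L.mkQ ((2:ℤ) • X v) := by
      rw [pow_one, ← map_zsmul]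
      norm_num
    rw [this, Submodule.mkQ_apply, Submodule.Quotient.mk_eq_zero]
    exact hXL v
  set F : S → (pPrimary 2 (Submodule.map L.mkQ (dualLattice B L))) :=
    fun s => ⟨L.mkQ (X s.1), hFmem s.1 s.2⟩ with hF_def
  have hFinj : Function.Injective F := by
    intro s t h
    have h1 : L.mkQ (X s.1) = L.mkQ (X t.1) := congrArg Subtype.val h
    rw [Submodule.mkQ_apply, Submodule.mkQ_apply, Submodule.Quotient.eq] at h1
    set z : L := ⟨X s.1 - X t.1, h1⟩ with hz_def
    have hcoe : ((∑ j, (w s.1 j - w t.1 j) • basis j : L) : V) = (((2:ℤ) • z : L) : V) := by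
      push_cast [sub_smul]
      rw [Finset.sum_sub_distrib]
      show (∑ j, w s.1 j • e j) - (∑ j, w t.1 j • e j) = (2:ℤ) • (X s.1 - X t.1)
      rw [smul_sub, hX2, hX2]
    have heq : (∑ j, (w s.1 j - w t.1 j) • basis j) = (2:ℤ) • z := Subtype.coe_injective hcoe
    have hrepr2 : ∀ j, w s.1 j - w t.1 j = 2 * basis.repr z j := by
      intro j
      have h3 := congrArg (fun u : L => basis.repr u j) heq
      simpa [Module.Basis.repr_sum_self, Finsupp.single_apply] using h3
    have : s.1 = t.1 := by
      funext j
      have h4 : ((w s.1 j - w t.1 j : ℤ) : ZMod 2) = 0 := by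
        rw [hrepr2 j]
        push_cast
        rw [show (2 : ZMod 2) = 0 by decide]
        ring
      push_cast at h4
      rw [hw2, hw2, sub_eq_zero] at h4
      exact h4
    exact Subtype.ext this
  have hFsurj : Function.Surjective F := by
    intro p
    obtain ⟨hmem, -⟩ := p.2
    obtain ⟨x, hxdual, hxq⟩ := hmem
    have h2p : (2:ℤ) • (p : V ⧸ L) = 0 := by
      have := htors p
      exact congrArg Subtype.val this
    have h2x : (2:ℤ) • x ∈ L := by
      have h5 : L.mkQ ((2:ℤ) • x) = 0 := by rw [map_zsmul, hxq, h2p]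
      rwa [Submodule.mkQ_apply, Submodule.Quotient.mk_eq_zero] at h5
    set c : Fin n → ℤ := fun j => basis.repr ⟨(2:ℤ) • x, h2x⟩ j with hc_def
    have hxsum : (2:ℤ) • x = ∑ j, (c j : ℚ) • e j := hrepr _ h2x
    set v : Fin n → ZMod 2 := fun j => ((c j : ℤ) : ZMod 2) with hv_def
    have hvS : v ∈ S := by
      intro i
      obtain ⟨m, hm⟩ := hxdual (e i) (he i)
      have hsum : ((∑ j, c j * A j i : ℤ) : ℚ) = 2 * m := by
        push_cast
        have h6 : B ((2:ℤ) • x) (e i) = ∑ j, (c j : ℚ) * (A j i : ℚ) := by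
          rw [hxsum, hB1]
          exact Finset.sum_congr rfl fun j _ => by rw [hA]
        rw [← h6, map_zsmul, LinearMap.smul_apply, hm, zsmul_eq_mul]
        push_cast
        ring
      have h7 : (∑ j, c j * A j i : ℤ) = 2 * m := by exact_mod_cast hsum
      have h8 : ((∑ j, c j * A j i : ℤ) : ZMod 2) = 0 := by
        rw [h7]
        push_cast
        rw [show (2 : ZMod 2) = 0 by decide]
        ring
      rw [← h8]
      push_cast
      exact Finset.sum_congr rfl fun j _ => by rw [hAsymm i j, mul_comm]
    refine ⟨⟨v, hvS⟩, ?_⟩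
    apply Subtype.ext
    show L.mkQ (X v) = (p : V ⧸ L)
    rw [← hxq, Submodule.mkQ_apply, Submodule.mkQ_apply, Submodule.Quotient.eq]
    have hpar : ∀ j, ∃ d : ℤ, w v j - c j = 2 * d := by
      intro j
      have h9 : ((w v j - c j : ℤ) : ZMod 2) = 0 := by
        push_cast
        rw [hw2]
        simp [hv_def]
      obtain ⟨d, hd⟩ := (ZMod.intCast_zmod_eq_zero_iff_dvd _ 2).1 h9
      exact ⟨d, hd⟩
    choose d hd using hpar
    have hXvx : X v - x = ∑ j, d j • e j := by
      have hx' : x = (2:ℚ)⁻¹ • ∑ j, (c j : ℚ) • e j := by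
        rw [← hxsum, ← Int.cast_smul_eq_zsmul ℚ, smul_smul]
        norm_num
      rw [hX_def, hx']
      show (2:ℚ)⁻¹ • (∑ j, (w v j : ℚ) • e j) - (2:ℚ)⁻¹ • ∑ j, (c j : ℚ) • e j
          = ∑ j, d j • e j
      rw [← smul_sub, ← Finset.sum_sub_distrib]
      have : ∀ j, (w v j : ℚ) • e j - (c j : ℚ) • e j = (2 * (d j : ℚ)) • e j := by
        intro j
        rw [← sub_smul]
        congr 1
        exact_mod_cast hd j
      rw [Finset.sum_congr rfl fun j _ => this j]
      rw [Finset.smul_sum]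
      refine Finset.sum_congr rfl fun j _ => ?_
      rw [smul_smul, ← Int.cast_smul_eq_zsmul ℚ]
      congr 1
      ring
    rw [hXvx]
    exact Submodule.sum_mem _ fun j _ => L.smul_mem _ (he j)
  -- cardinality argument: S is everything
  have hSuniv : S = Set.univ := by
    have hcard : Nat.card S = Nat.card (Fin n → ZMod 2) := by
      rw [Nat.card_congr (Equiv.ofBijective F ⟨hFinj, hFsurj⟩), Nat.card_congr ee.toEquiv]
    refine Set.eq_of_subset_of_ncard_le (Set.subset_univ _) ?_ Set.finite_univ
    rw [Set.ncard_univ]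
    exact le_of_eq hcard.symm
  have hA2 : ∀ i j, ∃ a : ℤ, A i j = 2 * a := by
    intro i j
    have hv : (Pi.single j (1 : ZMod 2)) ∈ S := hSuniv ▸ Set.mem_univ _
    have h10 := hv i
    rw [Finset.sum_eq_single j (fun k _ hk => by simp [Pi.single_apply, hk])
      (fun h => absurd (Finset.mem_univ j) h)] at h10
    simp only [Pi.single_eq_same, mul_one] at h10
    obtain ⟨a, ha⟩ := (ZMod.intCast_zmod_eq_zero_iff_dvd _ 2).1 h10
    exact ⟨a, ha⟩
  choose a ha using hA2
  -- the half form is integral on L, indeed B x y is always even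
  have hkey : ∀ x (hx : x ∈ L) y (hy : y ∈ L), (2:ℚ)⁻¹ * B x y =
      ((∑ i, ∑ j, basis.repr ⟨x, hx⟩ i * basis.repr ⟨y, hy⟩ j * a i j : ℤ) : ℚ) := by
    intro x hx y hy
    have hBxy : B x y = ((∑ i, ∑ j, basis.repr ⟨x, hx⟩ i * basis.repr ⟨y, hy⟩ j * A i j : ℤ) : ℚ) := by
      conv_lhs => rw [hrepr x hx, hrepr y hy]
      rw [hB1]
      push_cast
      refine Finset.sum_congr rfl fun i _ => ?_
      rw [hB2, Finset.mul_sum]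
      refine Finset.sum_congr rfl fun j _ => ?_
      rw [hA]
      ring
    rw [hBxy]
    have h11 : (∑ i, ∑ j, basis.repr ⟨x, hx⟩ i * basis.repr ⟨y, hy⟩ j * A i j : ℤ)
        = 2 * ∑ i, ∑ j, basis.repr ⟨x, hx⟩ i * basis.repr ⟨y, hy⟩ j * a i j := by
      rw [Finset.mul_sum]
      refine Finset.sum_congr rfl fun i _ => ?_
      rw [Finset.mul_sum]
      refine Finset.sum_congr rfl fun j _ => ?_
      rw [ha i j]
      ring
    rw [h11]
    push_cast
    ring
  have part1 : ∀ x ∈ L, ∀ y ∈ L, ∃ m : ℤ, (2 : ℚ)⁻¹ * B x y = m := by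
    intro x hx y hy
    exact ⟨_, hkey x hx y hy⟩
  refine ⟨part1, ?_, ?_⟩
  · -- evenness of the half lattice
    intro x hx
    set z : V := (2:ℚ)⁻¹ • x with hz_def
    have hzdual : z ∈ dualLattice B L := by
      intro y hy
      obtain ⟨m, hm⟩ := part1 x hx y hy
      refine ⟨m, ?_⟩
      rw [hz_def, map_smul, LinearMap.smul_apply, smul_eq_mul, hm]
    have h2z : (2:ℤ) • z ∈ L := by
      have : (2:ℤ) • z = x := by
        rw [hz_def, ← Int.cast_smul_eq_zsmul ℚ, smul_smul]
        norm_num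
      rwa [this]
    obtain ⟨m, hm⟩ := hbzero z hzdual h2z
    refine ⟨m, ?_⟩
    have hzz : B z z = (2:ℚ)⁻¹ * ((2:ℚ)⁻¹ * B x x) := by
      simp only [hz_def, map_smul, LinearMap.smul_apply, smul_eq_mul]
    rw [hzz] at hm
    linarith
  · -- non-degeneracy
    intro x hx
    apply hnd
    intro y
    have := hx y
    have h2 : (2:ℚ)⁻¹ ≠ 0 := by norm_num
    rcases mul_eq_zero.1 this with h | h
    · exact absurd h h2
    · exact h
end

section
/- In the setting of Lemma 'Ordercoprime': let f₁ ∈ O(L₁) be of finite order with characteristic polynomial χ_{f₁}(x) = Φ_{p^m}(x)^k for a prime p and m, k > 0, let f₂ ∈ O(L₂) be of finite order coprime to that of f₁, and suppose f̄_i(H_i) = H_i for subgroups H_i ⊆ G(L_i) glued by φ with φ ∘ f̄₁ = f̄₂ ∘ φ. Then H₁ (and hence H₂) is a p-elementary abelian group, i.e. p·H₁ = 0. -/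
/-- In the setting of the previous lemma, suppose moreover that the
characteristic polynomial of `f₁` is `Φ_{p^m}(x)^k` for a prime `p` and `m, k > 0`.  Then
`H₁` (and hence `H₂`) is a `p`-elementary abelian group, i.e. `p·H₁ = 0`. -/
theorem stmt7 {V₁ V₂ : Type*} [AddCommGroup V₁] [Module ℚ V₁] [AddCommGroup V₂] [Module ℚ V₂]
    [FiniteDimensional ℚ V₁] (B₁ : V₁ →ₗ[ℚ] V₁ →ₗ[ℚ] ℚ) (B₂ : V₂ →ₗ[ℚ] V₂ →ₗ[ℚ] ℚ)
    (L₁ : Submodule ℤ V₁) (L₂ : Submodule ℤ V₂) (n₁ n₂ : ℕ)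
    (hfull₁ : Submodule.span ℚ (L₁ : Set V₁) = ⊤)
    (hfull₂ : Submodule.span ℚ (L₂ : Set V₂) = ⊤)
    (hsymm₁ : ∀ x y : V₁, B₁ x y = B₁ y x) (hsymm₂ : ∀ x y : V₂, B₂ x y = B₂ y x)
    (hint₁ : ∀ x ∈ L₁, ∀ y ∈ L₁, ∃ m : ℤ, B₁ x y = m)
    (hint₂ : ∀ x ∈ L₂, ∀ y ∈ L₂, ∃ m : ℤ, B₂ x y = m)
    (hnd₁ : ∀ x : V₁, (∀ y : V₁, B₁ x y = 0) → x = 0)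
    (hnd₂ : ∀ x : V₂, (∀ y : V₂, B₂ x y = 0) → x = 0)
    -- the isometries `f₁ ∈ O(L₁)`, `f₂ ∈ O(L₂)`
    (f₁ : V₁ →ₗ[ℚ] V₁) (f₂ : V₂ →ₗ[ℚ] V₂)
    (hiso₁ : ∀ x y : V₁, B₁ (f₁ x) (f₁ y) = B₁ x y)
    (hiso₂ : ∀ x y : V₂, B₂ (f₂ x) (f₂ y) = B₂ x y)
    (hfL₁ : ∀ x ∈ L₁, f₁ x ∈ L₁) (hfL₂ : ∀ x ∈ L₂, f₂ x ∈ L₂)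
    -- finite orders
    (hn₁ : 0 < n₁) (hn₂ : 0 < n₂)
    (hord₁ : (f₁ : Module.End ℚ V₁) ^ n₁ = 1)
    (hord₂ : (f₂ : Module.End ℚ V₂) ^ n₂ = 1)
    (hcop : Nat.Coprime n₁ n₂)
    (p m k : ℕ) (hp : p.Prime) (hm : 0 < m) (hk : 0 < k)
    (hchar : LinearMap.charpoly f₁ = (Polynomial.cyclotomic (p ^ m) ℚ) ^ k)
    -- the induced maps `f̄ᵢ` on the glue groups (characterized on representatives)
    (F₁ : (V₁ ⧸ L₁) →ₗ[ℤ] (V₁ ⧸ L₁)) (F₂ : (V₂ ⧸ L₂) →ₗ[ℤ] (V₂ ⧸ L₂))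
    (hF₁ : ∀ x : V₁, F₁ (L₁.mkQ x) = L₁.mkQ (f₁ x))
    (hF₂ : ∀ x : V₂, F₂ (L₂.mkQ x) = L₂.mkQ (f₂ x))
    -- the subgroups `Hᵢ ⊆ G(Lᵢ)`, stable under `f̄ᵢ`
    (H₁ : Submodule ℤ (V₁ ⧸ L₁)) (H₂ : Submodule ℤ (V₂ ⧸ L₂))
    (hH₁ : H₁ ≤ Submodule.map L₁.mkQ (dualLattice B₁ L₁))
    (hH₂ : H₂ ≤ Submodule.map L₂.mkQ (dualLattice B₂ L₂))
    (hstab₁ : Submodule.map F₁ H₁ = H₁) (hstab₂ : Submodule.map F₂ H₂ = H₂)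
    -- the gluing map `φ : H₁ → H₂`, reversing the induced `ℚ/ℤ`-valued forms
    (φ : H₁ ≃ₗ[ℤ] H₂)
    (hglue : ∀ x y : V₁, ∀ x' y' : V₂,
      x ∈ dualLattice B₁ L₁ → y ∈ dualLattice B₁ L₁ →
      x' ∈ dualLattice B₂ L₂ → y' ∈ dualLattice B₂ L₂ →
      ∀ (hx : L₁.mkQ x ∈ H₁) (hy : L₁.mkQ y ∈ H₁),
        ((φ ⟨L₁.mkQ x, hx⟩ : H₂) : V₂ ⧸ L₂) = L₂.mkQ x' →
        ((φ ⟨L₁.mkQ y, hy⟩ : H₂) : V₂ ⧸ L₂) = L₂.mkQ y' →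
        ∃ n : ℤ, B₁ x y + B₂ x' y' = n)
    -- `φ ∘ f̄₁ = f̄₂ ∘ φ`
    (hcomm : ∀ (q : V₁ ⧸ L₁) (hq : q ∈ H₁) (hfq : F₁ q ∈ H₁),
      ((φ ⟨F₁ q, hfq⟩ : H₂) : V₂ ⧸ L₂) = F₂ ((φ ⟨q, hq⟩ : H₂) : V₂ ⧸ L₂)) :
    (∀ q ∈ H₁, (p : ℤ) • q = 0) ∧ (∀ q ∈ H₂, (p : ℤ) • q = 0) := by

  classical
  -- Step 1: the cyclotomic polynomial annihilates `f₁`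
  have haevalord : Polynomial.aeval (R := ℚ) (A := Module.End ℚ V₁) f₁ (Polynomial.X ^ n₁ - 1) = 0 := by
    simp [map_sub, Polynomial.aeval_X_pow, hord₁]
  have hdvd1 : minpoly ℚ (f₁ : Module.End ℚ V₁) ∣ (Polynomial.X ^ n₁ - 1 : Polynomial ℚ) :=
    minpoly.dvd _ _ haevalord
  have hsep : (Polynomial.X ^ n₁ - 1 : Polynomial ℚ).Separable :=
    Polynomial.X_pow_sub_one_separable_iff.mpr (by exact_mod_cast hn₁.ne')
  have hsf : Squarefree (minpoly ℚ (f₁ : Module.End ℚ V₁)) :=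
    hsep.squarefree.squarefree_of_dvd hdvd1
  have hdvd2 : minpoly ℚ (f₁ : Module.End ℚ V₁) ∣ (Polynomial.cyclotomic (p ^ m) ℚ) ^ k := by
    rw [← hchar]; exact LinearMap.minpoly_dvd_charpoly f₁
  have hdvdΦ : minpoly ℚ (f₁ : Module.End ℚ V₁) ∣ Polynomial.cyclotomic (p ^ m) ℚ :=
    (hsf.dvd_pow_iff_dvd hk.ne').mp hdvd2
  have hΦ0 : Polynomial.aeval (R := ℚ) (A := Module.End ℚ V₁) f₁ (Polynomial.cyclotomic (p ^ m) ℚ) = 0 := by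
    obtain ⟨c, hc⟩ := hdvdΦ
    rw [hc, map_mul, minpoly.aeval, zero_mul]
  obtain ⟨m', rfl⟩ : ∃ m', m = m' + 1 := ⟨m - 1, (Nat.succ_pred_eq_of_pos hm).symm⟩
  have hgeom := Polynomial.cyclotomic_prime_pow_eq_geom_sum (R := ℚ) (n := m') hp
  have hsum : (∑ i ∈ Finset.range p, ((f₁ : Module.End ℚ V₁) ^ (p ^ m')) ^ i) = 0 := by
    have h := hΦ0
    rw [hgeom] at h
    simpa [map_sum, map_pow, Polynomial.aeval_X_pow] using h
  -- Step 2: compatibility of powers with the quotient maps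
  have hFpow₁ : ∀ (j : ℕ) (x : V₁), (F₁ ^ j) (L₁.mkQ x) = L₁.mkQ (((f₁ : Module.End ℚ V₁) ^ j) x) := by
    intro j
    induction j with
    | zero => intro x; simp
    | succ j ih =>
      intro x
      have e1 : (F₁ ^ (j + 1)) (L₁.mkQ x) = (F₁ ^ j) (F₁ (L₁.mkQ x)) := by
        rw [pow_succ]; rfl
      rw [e1, hF₁, ih, pow_succ]
      rfl
  have hFpow₂ : ∀ (j : ℕ) (x : V₂), (F₂ ^ j) (L₂.mkQ x) = L₂.mkQ (((f₂ : Module.End ℚ V₂) ^ j) x) := by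
    intro j
    induction j with
    | zero => intro x; simp
    | succ j ih =>
      intro x
      have e1 : (F₂ ^ (j + 1)) (L₂.mkQ x) = (F₂ ^ j) (F₂ (L₂.mkQ x)) := by
        rw [pow_succ]; rfl
      rw [e1, hF₂, ih, pow_succ]
      rfl
  have hF₁per : ∀ q : V₁ ⧸ L₁, (F₁ ^ n₁) q = q := by
    intro q
    obtain ⟨x, rfl⟩ := L₁.mkQ_surjective q
    rw [hFpow₁, hord₁]
    rfl
  have hF₂per : ∀ q : V₂ ⧸ L₂, (F₂ ^ n₂) q = q := by
    intro q
    obtain ⟨x, rfl⟩ := L₂.mkQ_surjective q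
    rw [hFpow₂, hord₂]
    rfl
  -- Step 3: `H₁` is stable under powers of `F₁`
  have hmem : ∀ q ∈ H₁, F₁ q ∈ H₁ := by
    intro q hq
    rw [← hstab₁]
    exact Submodule.mem_map_of_mem hq
  have hmempow : ∀ (j : ℕ) (q : V₁ ⧸ L₁), q ∈ H₁ → (F₁ ^ j) q ∈ H₁ := by
    intro j
    induction j with
    | zero => intro q hq; simpa using hq
    | succ j ih =>
      intro q hq
      have e1 : (F₁ ^ (j + 1)) q = F₁ ((F₁ ^ j) q) := by rw [pow_succ']; rfl
      rw [e1]
      exact hmem _ (ih q hq)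
  -- Step 4: `φ` intertwines powers
  have hcommpow : ∀ (j : ℕ) (q : V₁ ⧸ L₁) (hq : q ∈ H₁) (hj : (F₁ ^ j) q ∈ H₁),
      ((φ ⟨(F₁ ^ j) q, hj⟩ : H₂) : V₂ ⧸ L₂) = (F₂ ^ j) ((φ ⟨q, hq⟩ : H₂) : V₂ ⧸ L₂) := by
    intro j
    induction j with
    | zero =>
      intro q hq hj
      have e : (⟨(F₁ ^ 0) q, hj⟩ : H₁) = ⟨q, hq⟩ := Subtype.ext (by simp)
      rw [e]; simp
    | succ j ih =>
      intro q hq hj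
      have hj' : (F₁ ^ j) q ∈ H₁ := hmempow j q hq
      have hj'' : F₁ ((F₁ ^ j) q) ∈ H₁ := hmem _ hj'
      have e : (⟨(F₁ ^ (j + 1)) q, hj⟩ : H₁) = ⟨F₁ ((F₁ ^ j) q), hj''⟩ :=
        Subtype.ext (show (F₁ ^ (j + 1)) q = F₁ ((F₁ ^ j) q) by rw [pow_succ']; rfl)
      rw [e, hcomm _ hj' hj'', ih q hq hj']
      have e2 : (F₂ ^ (j + 1)) ((φ ⟨q, hq⟩ : H₂) : V₂ ⧸ L₂)
          = F₂ ((F₂ ^ j) ((φ ⟨q, hq⟩ : H₂) : V₂ ⧸ L₂)) := by rw [pow_succ']; rfl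
      rw [e2]
  -- Step 5: `F₁ ^ n₂` is the identity on `H₁`
  have hFn2 : ∀ (q : V₁ ⧸ L₁), q ∈ H₁ → (F₁ ^ n₂) q = q := by
    intro q hq
    have h1 := hcommpow n₂ q hq (hmempow n₂ q hq)
    rw [hF₂per] at h1
    have h2 : φ ⟨(F₁ ^ n₂) q, hmempow n₂ q hq⟩ = φ ⟨q, hq⟩ := Subtype.ext h1
    have h3 := φ.injective h2
    exact congrArg Subtype.val h3
  -- Step 6: `F₁` is the identity on `H₁` (coprimality)
  have hper1 : ∀ (c : ℕ) (q : V₁ ⧸ L₁), (F₁ ^ (n₁ * c)) q = q := by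
    intro c
    induction c with
    | zero => intro q; simp
    | succ c ih =>
      intro q
      have e : (F₁ ^ (n₁ * (c + 1))) q = (F₁ ^ (n₁ * c)) ((F₁ ^ n₁) q) := by
        rw [Nat.mul_succ, pow_add]; rfl
      rw [e, hF₁per, ih]
  have hper2 : ∀ (d : ℕ) (q : V₁ ⧸ L₁), q ∈ H₁ → (F₁ ^ (n₂ * d)) q = q := by
    intro d
    induction d with
    | zero => intro q hq; simp
    | succ d ih =>
      intro q hq
      have e : (F₁ ^ (n₂ * (d + 1))) q = (F₁ ^ (n₂ * d)) ((F₁ ^ n₂) q) := by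
        rw [Nat.mul_succ, pow_add]; rfl
      rw [e, hFn2 q hq, ih q hq]
  have hFid : ∀ (q : V₁ ⧸ L₁), q ∈ H₁ → F₁ q = q := by
    intro q hq
    rcases eq_or_lt_of_le (Nat.succ_le_of_lt hn₂ : 1 ≤ n₂) with h1 | h2
    · have := hFn2 q hq
      rw [← h1, pow_one] at this
      exact this
    · obtain ⟨c, -, hc⟩ := Nat.exists_mul_mod_eq_one_of_coprime hcop h2
      have hdm : n₂ * (n₁ * c / n₂) + 1 = n₁ * c := by
        conv_rhs => rw [← Nat.div_add_mod (n₁ * c) n₂]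
        rw [hc]
      have h3 : (F₁ ^ (n₁ * c)) q = q := hper1 c q
      rw [← hdm, pow_add, pow_one] at h3
      have h4 : (F₁ ^ (n₂ * (n₁ * c / n₂)) * F₁) q
          = (F₁ ^ (n₂ * (n₁ * c / n₂))) (F₁ q) := rfl
      rw [h4, hper2 _ (F₁ q) (hmem q hq)] at h3
      exact h3
  have hFidpow : ∀ (j : ℕ) (q : V₁ ⧸ L₁), q ∈ H₁ → (F₁ ^ j) q = q := by
    intro j
    induction j with
    | zero => intro q hq; simp
    | succ j ih =>
      intro q hq
      have e : (F₁ ^ (j + 1)) q = (F₁ ^ j) (F₁ q) := by rw [pow_succ]; rfl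
      rw [e, hFid q hq, ih q hq]
  -- Step 7: conclude `p • q = 0` on `H₁`
  have key₁ : ∀ q ∈ H₁, (p : ℤ) • q = 0 := by
    intro q hq
    obtain ⟨x, hxdual, hxq⟩ := hH₁ hq
    have h0 : (∑ i ∈ Finset.range p, (((f₁ : Module.End ℚ V₁) ^ (p ^ m')) ^ i)) x = 0 := by
      rw [hsum]; rfl
    have h1 : (∑ i ∈ Finset.range p, ((((f₁ : Module.End ℚ V₁) ^ (p ^ m')) ^ i) x)) = 0 := by
      rw [LinearMap.coe_sum, Finset.sum_apply] at h0
      exact h0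
    have h2 : (∑ i ∈ Finset.range p, L₁.mkQ ((((f₁ : Module.End ℚ V₁) ^ (p ^ m')) ^ i) x)) = 0 := by
      rw [← map_sum, h1, map_zero]
    have h3 : ∀ i : ℕ, L₁.mkQ ((((f₁ : Module.End ℚ V₁) ^ (p ^ m')) ^ i) x) = q := by
      intro i
      rw [← pow_mul, ← hFpow₁, hxq]
      exact hFidpow _ q hq
    rw [Finset.sum_congr rfl (fun i _ => h3 i), Finset.sum_const, Finset.card_range] at h2
    simpa using h2
  refine ⟨key₁, ?_⟩
  intro q hq
  set a : H₁ := φ.symm ⟨q, hq⟩ with ha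
  have h1 : (p : ℤ) • (a : V₁ ⧸ L₁) = 0 := key₁ _ a.2
  have h2 : (p : ℤ) • a = 0 := Subtype.ext (by simpa using h1)
  have h3 : φ ((p : ℤ) • a) = 0 := by rw [h2, map_zero]
  rw [map_smul, ha, LinearEquiv.apply_symm_apply] at h3
  have h4 := congrArg (Subtype.val) h3
  simpa using h4
end

section
/- Let L be a hyperbolic lattice of signature (1,n), let f ∈ O⁺(L), and let h ∈ L with (h,h) > 0. If r ∈ L satisfies r² = −2, (r,h)·(r,f(h)) < 0, then setting x = (h,h), y = (h,f(h)), a = (h,r), b = (f(h),r), the inequality −2x² + 2y² + 2aby ≥ x(a² + b²) holds; in particular, since x > 0, y > 0 and ab < 0, the integers a and b are bounded, so the set of pairs ((r,h),(r,f(h))) as r ranges over such roots is finite. -/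
lemma cs_aux {P Q S : ℚ} (H : ∀ t : ℚ, 0 ≤ P + 2*t*S + t^2*Q) : S^2 ≤ P*Q := by
  have hP : 0 ≤ P := by simpa using H 0
  have hQ : 0 ≤ Q := by
    by_contra hq
    push_neg at hq
    set t := max 1 ((P+1)/(-Q)) with ht
    have h1 : 1 ≤ t := le_max_left _ _
    have h2 : (P+1)/(-Q) ≤ t := le_max_right _ _
    have h3 : P + 1 ≤ t * (-Q) := (div_le_iff₀ (by linarith)).mp h2
    have h4 := H t
    have h5 := H (-t)
    nlinarith [mul_nonneg (by nlinarith : (0:ℚ) ≤ t^2 - t) (by linarith : (0:ℚ) ≤ -Q)]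
  rcases eq_or_lt_of_le hQ with hq | hq
  · have hS : S = 0 := by
      by_contra hS
      have ht : P + 2*(-(P+1)/(2*S))*S + (-(P+1)/(2*S))^2*Q = -1 := by
        rw [← hq]; field_simp; ring
      have h6 := H (-(P+1)/(2*S))
      rw [ht] at h6
      linarith
    simp [hS, ← hq]
  · have h6 := H (-S/Q)
    have h2 : P + 2*(-S/Q)*S + (-S/Q)^2*Q = P - S^2/Q := by
      field_simp; ring
    rw [h2] at h6
    have := (div_le_iff₀ hq).mp (by linarith : S^2/Q ≤ P)
    linarith

lemma pencil {V : Type*} [AddCommGroup V] [Module ℚ V]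
    (B : V →ₗ[ℚ] V →ₗ[ℚ] ℚ) (hsymm : ∀ x y : V, B x y = B y x) (v w : V) (t : ℚ) :
    B (v + t • w) (v + t • w) = B v v + 2*t*(B v w) + t^2 * B w w := by
  simp [map_add, map_smul, smul_eq_mul, hsymm w v]
  ring

lemma diag_expand {V : Type*} [AddCommGroup V] [Module ℚ V] {m : ℕ}
    (B : V →ₗ[ℚ] V →ₗ[ℚ] ℚ) (e : Module.Basis (Fin m) ℚ V)
    (horth : ∀ i j, i ≠ j → B (e i) (e j) = 0) (w : V) :
    B w w = ∑ i, (e.repr w i)^2 * B (e i) (e i) := by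
  conv_lhs => rw [← e.sum_repr w]
  simp only [map_sum, map_smul, LinearMap.sum_apply, LinearMap.smul_apply, smul_eq_mul]
  refine Finset.sum_congr rfl fun i _ => ?_
  rw [Finset.sum_eq_single i]
  · ring
  · intro j _ hj
    simp [horth j i hj]
  · simp

/-- Orthogonal complement of a positive vector is negative semidefinite. -/
lemma perp_nonpos {V : Type*} [AddCommGroup V] [Module ℚ V] {n : ℕ}
    (B : V →ₗ[ℚ] V →ₗ[ℚ] ℚ) (hsymm : ∀ x y : V, B x y = B y x)
    (e : Module.Basis (Fin (n + 1)) ℚ V)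
    (horth : ∀ i j, i ≠ j → B (e i) (e j) = 0)
    (hpos : 0 < B (e 0) (e 0)) (hneg : ∀ i, i ≠ 0 → B (e i) (e i) < 0)
    (h : V) (hh : 0 < B h h) :
    ∀ v, B h v = 0 → B v v ≤ 0 := by
  intro v hv
  set c : ℚ := B (e 0) (e 0) with hc
  -- The "negative part" form
  set N : V → V → ℚ := fun u w => e.repr u 0 * e.repr w 0 * c - B u w with hN
  have hNnn : ∀ w, 0 ≤ N w w := by
    intro w
    have hdiag := diag_expand B e horth w
    have hsplit : ∑ i, (e.repr w i)^2 * B (e i) (e i)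
        = (e.repr w 0)^2 * c + ∑ i ∈ Finset.univ.erase (0 : Fin (n+1)),
            (e.repr w i)^2 * B (e i) (e i) :=
      (Finset.add_sum_erase Finset.univ (fun i => (e.repr w i)^2 * B (e i) (e i))
        (Finset.mem_univ 0)).symm
    have hterm : ∑ i ∈ Finset.univ.erase (0 : Fin (n+1)), (e.repr w i)^2 * B (e i) (e i) ≤ 0 := by
      apply Finset.sum_nonpos
      intro i hi
      have hi0 : i ≠ 0 := Finset.ne_of_mem_erase hi
      exact mul_nonpos_of_nonneg_of_nonpos (sq_nonneg _) (le_of_lt (hneg i hi0))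
    have : N w w = -(∑ i ∈ Finset.univ.erase (0 : Fin (n+1)), (e.repr w i)^2 * B (e i) (e i)) := by
      simp only [hN]
      rw [hdiag, hsplit]
      ring
    rw [this]
    linarith
  have hNpencil : ∀ t : ℚ, N (h + t • v) (h + t • v) = N h h + 2*t*(N h v) + t^2 * N v v := by
    intro t
    simp only [hN, map_add, map_smul, LinearMap.add_apply, LinearMap.smul_apply,
      Finsupp.add_apply, Finsupp.smul_apply, smul_eq_mul]
    rw [hsymm v h]
    ring
  have H : ∀ t : ℚ, 0 ≤ N h h + 2*t*(N h v) + t^2 * N v v := by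
    intro t; rw [← hNpencil]; exact hNnn _
  have key := cs_aux H
  have e1 : N h v = e.repr h 0 * e.repr v 0 * c := by simp [hN, hv]
  have e2 : N h h = e.repr h 0 ^ 2 * c - B h h := by simp only [hN]; ring
  have e3 : N v v = e.repr v 0 ^ 2 * c - B v v := by simp only [hN]; ring
  have hNh := hNnn h
  have hNv := hNnn v
  rw [e1, e2, e3] at key
  rw [e2] at hNh
  rw [e3] at hNv
  by_contra hBv
  push_neg at hBv
  -- q^2 * c must vanish
  have hq : e.repr v 0 ^ 2 * c ≤ 0 := by
    nlinarith [mul_nonneg (by linarith : (0:ℚ) ≤ e.repr h 0 ^ 2 * c - B h h) (le_of_lt hBv)]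
  nlinarith [sq_nonneg (e.repr v 0), mul_nonneg (sq_nonneg (e.repr v 0)) (le_of_lt hpos)]
lemma int_abs_le_sq (m : ℤ) : |m| ≤ m^2 := by
  rcases eq_or_ne m 0 with rfl | hm
  · simp
  · nlinarith [Int.one_le_abs hm, sq_abs m, abs_nonneg m]

/-- Let `L` be a hyperbolic lattice of signature `(1,n)`, `f ∈ O⁺(L)`,
and `h ∈ L` with `(h,h) > 0`.  If `r ∈ L` satisfies `r² = -2` and `(r,h)·(r,f(h)) < 0`,
then with `x = (h,h)`, `y = (h,f(h))`, `a = (h,r)`, `b = (f(h),r)` the inequality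
`-2x² + 2y² + 2aby ≥ x(a² + b²)` holds; in particular the set of pairs
`((r,h),(r,f(h)))`, as `r` ranges over such roots, is finite. -/
theorem stmt10 {V : Type*} [AddCommGroup V] [Module ℚ V] [FiniteDimensional ℚ V]
    (B : V →ₗ[ℚ] V →ₗ[ℚ] ℚ) (L : Submodule ℤ V) (n : ℕ)
    (bL : Module.Basis (Fin (n + 1)) ℤ L)
    (hfull : Submodule.span ℚ (L : Set V) = ⊤)
    (hsymm : ∀ x y : V, B x y = B y x)
    (hint : ∀ x ∈ L, ∀ y ∈ L, ∃ m : ℤ, B x y = m)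
    -- signature (1, n) via an orthogonal `ℚ`-basis
    (e : Module.Basis (Fin (n + 1)) ℚ V)
    (horth : ∀ i j, i ≠ j → B (e i) (e j) = 0)
    (hpos : 0 < B (e 0) (e 0)) (hneg : ∀ i, i ≠ 0 → B (e i) (e i) < 0)
    -- `f ∈ O⁺(L)`
    (f : V →ₗ[ℚ] V)
    (hiso : ∀ x y : V, B (f x) (f y) = B x y)
    (hfL : ∀ x ∈ L, f x ∈ L) (hfLsurj : ∀ y ∈ L, ∃ x ∈ L, f x = y)
    (hplus : ∀ x : V, 0 < B x x → 0 < B x (f x))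
    (h : V) (hhL : h ∈ L) (hh : 0 < B h h) :
    (∀ r ∈ L, B r r = -2 → B r h * B r (f h) < 0 →
      B h h * ((B h r) ^ 2 + (B (f h) r) ^ 2) ≤
        -2 * (B h h) ^ 2 + 2 * (B h (f h)) ^ 2 +
          2 * (B h r) * (B (f h) r) * (B h (f h))) ∧
    {p : ℚ × ℚ | ∃ r ∈ L,
        B r r = -2 ∧ B r h * B r (f h) < 0 ∧ p = (B r h, B r (f h))}.Finite := by
  have hperp := perp_nonpos B hsymm e horth hpos hneg h hh
  have hmain : ∀ r ∈ L, B r r = -2 → B r h * B r (f h) < 0 →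
      B h h * ((B h r) ^ 2 + (B (f h) r) ^ 2) ≤
        -2 * (B h h) ^ 2 + 2 * (B h (f h)) ^ 2 +
          2 * (B h r) * (B (f h) r) * (B h (f h)) := by
    intro r _ hr2 _
    set x := B h h with hx
    set y := B h (f h) with hy
    set a := B h r with ha
    set b := B (f h) r with hb
    set v2 : V := x • f h - y • h with hv2
    set r2 : V := x • r - a • h with hr2'
    have hBvv : B (f h) (f h) = x := hiso h h
    have hBvh : B (f h) h = y := hsymm (f h) h
    have hBrh : B r h = a := hsymm r h
    have hBrv : B r (f h) = b := hsymm r (f h)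
    have hperp2 : B h v2 = 0 := by
      simp only [hv2, map_sub, map_smul, smul_eq_mul, ← hy, ← hx]
      ring
    have hperp3 : B h r2 = 0 := by
      simp only [hr2', map_sub, map_smul, smul_eq_mul, ← ha, ← hx]
      ring
    have H : ∀ t : ℚ, 0 ≤ (-B v2 v2) + 2*t*(-(B v2 r2)) + t^2*(-(B r2 r2)) := by
      intro t
      have h8 : B h (v2 + t • r2) = 0 := by
        simp only [map_add, map_smul, smul_eq_mul, hperp2, hperp3]; ring
      have h9 := hperp _ h8
      rw [pencil B hsymm] at h9
      linarith
    have key := cs_aux H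
    have e1 : B v2 v2 = x^3 - x*y^2 := by
      simp only [hv2, map_sub, map_smul, LinearMap.sub_apply, LinearMap.smul_apply,
        smul_eq_mul, hBvv, hBvh, ← hx, ← hy]
      ring
    have e2 : B r2 r2 = -2*x^2 - a^2*x := by
      simp only [hr2', map_sub, map_smul, LinearMap.sub_apply, LinearMap.smul_apply,
        smul_eq_mul, hr2, hBrh, ← hx, ← ha]
      ring
    have e3 : B v2 r2 = x^2*b - x*a*y := by
      simp only [hv2, hr2', map_sub, map_smul, LinearMap.sub_apply, LinearMap.smul_apply,
        smul_eq_mul, hBvh, ← hx, ← hy, ← ha, ← hb]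
      ring
    rw [e1, e2, e3] at key
    have hx3 : (0:ℚ) < x^3 := pow_pos hh 3
    have h7 : x^3 * (x * (a^2 + b^2) - (-2*x^2 + 2*y^2 + 2*a*b*y)) ≤ x^3 * 0 := by
      nlinarith [key]
    have := le_of_mul_le_mul_left h7 hx3
    linarith
  refine ⟨hmain, ?_⟩
  have hy : 0 < B h (f h) := hplus h hh
  set M : ℤ := ⌈(2*(B h (f h))^2/(B h h))⌉ with hM
  apply Set.Finite.subset (((Set.finite_Icc (-M) M).prod (Set.finite_Icc (-M) M)).image
    (fun m : ℤ × ℤ => ((m.1 : ℚ), (m.2 : ℚ))))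
  rintro p ⟨r, hrL, hr2, hsgn, rfl⟩
  obtain ⟨ma, hma⟩ := hint r hrL h hhL
  obtain ⟨mb, hmb⟩ := hint r hrL (f h) (hfL h hhL)
  have hineq := hmain r hrL hr2 hsgn
  have hab : B h r * B (f h) r < 0 := by
    rw [hsymm h r, hsymm (f h) r]; exact hsgn
  have haby : B h r * B (f h) r * B h (f h) < 0 := mul_neg_of_neg_of_pos hab hy
  have hbound : ∀ m : ℤ, B h h * (m:ℚ)^2 ≤ 2*(B h (f h))^2 → m ∈ Set.Icc (-M) M := by
    intro m hm
    have h1 : (m:ℚ)^2 ≤ 2*(B h (f h))^2 / (B h h) := (le_div_iff₀ hh).mpr (by linarith)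
    have h2 : (m:ℚ)^2 ≤ (M:ℚ) := h1.trans (Int.le_ceil _)
    have h3 : m^2 ≤ M := by exact_mod_cast h2
    have h4 : |m| ≤ M := (int_abs_le_sq m).trans h3
    rw [Set.mem_Icc]
    exact abs_le.mp h4
  have hma2 : B h h * (ma:ℚ)^2 ≤ 2*(B h (f h))^2 := by
    rw [← hma, ← hsymm h r]
    nlinarith [sq_nonneg (B (f h) r), mul_pos hh hh,
      mul_nonneg (le_of_lt hh) (sq_nonneg (B (f h) r))]
  have hmb2 : B h h * (mb:ℚ)^2 ≤ 2*(B h (f h))^2 := by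
    rw [← hmb, ← hsymm (f h) r]
    nlinarith [sq_nonneg (B h r), mul_pos hh hh,
      mul_nonneg (le_of_lt hh) (sq_nonneg (B h r))]
  exact ⟨(ma, mb), ⟨hbound ma hma2, hbound mb hmb2⟩, by simp [hma, hmb]⟩
end

section
/- Let L be an even hyperbolic lattice, f ∈ O⁺(L) positive (i.e., f preserves some chamber of the positive cone cut out by root hyperplanes), and L′ ⊆ L a hyperbolic sublattice (of signature (1, m)) with f(L′) = L′. Then the restriction f|L′ ∈ O⁺(L′) is positive. -/
section helpers
variable {d : ℕ} (B : (Fin d → ℝ) →ₗ[ℝ] (Fin d → ℝ) →ₗ[ℝ] ℝ)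

private lemma expand_right' {ι : Type*} [Fintype ι] (u : Fin d → ℝ) (c : ι → ℝ)
    (v : ι → Fin d → ℝ) : B u (∑ j, c j • v j) = ∑ j, c j * B u (v j) := by simp

private lemma expand_left' {ι : Type*} [Fintype ι] (u : Fin d → ℝ) (c : ι → ℝ)
    (v : ι → Fin d → ℝ) : B (∑ j, c j • v j) u = ∑ j, c j * B (v j) u := by
  simp [map_sum, LinearMap.sum_apply]

private lemma diag_right' {ι : Type*} [Fintype ι] [DecidableEq ι] (u : Fin d → ℝ) (c : ι → ℝ)
    (v : ι → Fin d → ℝ) (k : ι) (h : ∀ j, j ≠ k → B u (v j) = 0) :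
    B u (∑ j, c j • v j) = c k * B u (v k) := by
  rw [expand_right']
  exact Finset.sum_eq_single k (fun j _ hj => by rw [h j hj, mul_zero])
    (fun h => absurd (Finset.mem_univ k) h)

private lemma quad_sum' {ι : Type*} [Fintype ι] [DecidableEq ι] (c : ι → ℝ) (v : ι → Fin d → ℝ)
    (h : ∀ i j, i ≠ j → B (v i) (v j) = 0) :
    B (∑ i, c i • v i) (∑ j, c j • v j) = ∑ i, c i * c i * B (v i) (v i) := by
  rw [expand_left']
  refine Finset.sum_congr rfl fun i _ => ?_
  rw [diag_right' B (v i) c v i (fun j hj => h i j (Ne.symm hj)), mul_assoc]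

end helpers

set_option maxHeartbeats 2000000 in
/-- Let `L` be an even hyperbolic lattice (realized in `ℝ^d`),
`f ∈ O⁺(L)` positive (it preserves some chamber of the positive cone cut out by the root
hyperplanes), and `L' ⊆ L` an `f`-stable hyperbolic sublattice of signature `(1,m)`.  Then
the restriction `f|L'` is positive: it preserves some chamber cut out in the positive cone
of `L' ⊗ ℝ` by the root hyperplanes of `L'`. -/
theorem stmt12 (d n m : ℕ)
    (B : (Fin d → ℝ) →ₗ[ℝ] (Fin d → ℝ) →ₗ[ℝ] ℝ)
    (L : Submodule ℤ (Fin d → ℝ))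
    (bL : Module.Basis (Fin (n + 1)) ℤ L)
    (hfull : Submodule.span ℝ (L : Set (Fin d → ℝ)) = ⊤)
    (hsymm : ∀ x y, B x y = B y x)
    (hint : ∀ x ∈ L, ∀ y ∈ L, ∃ k : ℤ, B x y = k)
    (heven : ∀ x ∈ L, ∃ k : ℤ, B x x = 2 * k)
    -- signature (1, n) via an orthogonal basis
    (e : Module.Basis (Fin (n + 1)) ℝ (Fin d → ℝ))
    (horth : ∀ i j, i ≠ j → B (e i) (e j) = 0)
    (hpos : 0 < B (e 0) (e 0)) (hneg : ∀ i, i ≠ 0 → B (e i) (e i) < 0)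
    -- `f` an isometry of `L`
    (f : (Fin d → ℝ) →ₗ[ℝ] (Fin d → ℝ))
    (hiso : ∀ x y, B (f x) (f y) = B x y)
    (hfL : ∀ x ∈ L, f x ∈ L) (hfLsurj : ∀ y ∈ L, ∃ x ∈ L, f x = y)
    -- `f` is positive: it maps some chamber to itself
    (hpositive : ∃ x ∈ {x : Fin d → ℝ | 0 < B x x ∧ ∀ r ∈ L, B r r = -2 → B r x ≠ 0},
      f '' connectedComponentIn
          {x : Fin d → ℝ | 0 < B x x ∧ ∀ r ∈ L, B r r = -2 → B r x ≠ 0} x =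
        connectedComponentIn
          {x : Fin d → ℝ | 0 < B x x ∧ ∀ r ∈ L, B r r = -2 → B r x ≠ 0} x)
    -- the `f`-stable hyperbolic sublattice `L'` of signature `(1, m)`
    (L' : Submodule ℤ (Fin d → ℝ)) (hL'L : L' ≤ L)
    (hfL' : ∀ x ∈ L', f x ∈ L') (hfL'surj : ∀ y ∈ L', ∃ x ∈ L', f x = y)
    (e' : Module.Basis (Fin (m + 1)) ℝ (Submodule.span ℝ (L' : Set (Fin d → ℝ))))
    (horth' : ∀ i j, i ≠ j → B (e' i) (e' j) = 0)
    (hpos' : 0 < B (e' 0) (e' 0)) (hneg' : ∀ i, i ≠ 0 → B (e' i) (e' i) < 0) :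
    ∃ x ∈ {x : Fin d → ℝ | x ∈ Submodule.span ℝ (L' : Set (Fin d → ℝ)) ∧
        0 < B x x ∧ ∀ r ∈ L', B r r = -2 → B r x ≠ 0},
      f '' connectedComponentIn
          {x : Fin d → ℝ | x ∈ Submodule.span ℝ (L' : Set (Fin d → ℝ)) ∧
            0 < B x x ∧ ∀ r ∈ L', B r r = -2 → B r x ≠ 0} x =
        connectedComponentIn
          {x : Fin d → ℝ | x ∈ Submodule.span ℝ (L' : Set (Fin d → ℝ)) ∧
            0 < B x x ∧ ∀ r ∈ L', B r r = -2 → B r x ≠ 0} x := by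
  classical
  let V' : Submodule ℝ (Fin d → ℝ) := Submodule.span ℝ (L' : Set (Fin d → ℝ))
  -- diagonal entries are nonzero
  have hd' : ∀ i, B (e' i) (e' i) ≠ 0 := by
    intro i
    by_cases hi : i = 0
    · subst hi; exact ne_of_gt hpos'
    · exact ne_of_lt (hneg' i hi)
  have hd : ∀ i, B (e i) (e i) ≠ 0 := by
    intro i
    by_cases hi : i = 0
    · subst hi; exact ne_of_gt hpos
    · exact ne_of_lt (hneg i hi)
  -- nondegeneracy of B on the full space
  have hBnd : ∀ x : Fin d → ℝ, (∀ z, B x z = 0) → x = 0 := by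
    intro x hx
    refine e.ext_elem fun i => ?_
    have hrep : (∑ j, e.repr x j • e j) = x := e.sum_repr x
    have h1 : B x (e i) = e.repr x i * B (e i) (e i) := by
      conv_lhs => rw [← hrep]
      rw [expand_left']
      exact Finset.sum_eq_single i (fun j _ hj => by rw [horth j i hj, mul_zero])
        (fun h => absurd (Finset.mem_univ i) h)
    rw [hx (e i)] at h1
    have h2 := (mul_eq_zero.mp h1.symm).resolve_right (hd i)
    simpa using h2
  -- f is injective, hence bijective
  have hfinj : Function.Injective f := by
    rw [← LinearMap.ker_eq_bot, eq_bot_iff]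
    intro x hx
    rw [LinearMap.mem_ker] at hx
    have hx0 : x = 0 := by
      refine hBnd x fun z => ?_
      have h := hiso x z
      rw [hx] at h
      simpa using h.symm
    simpa [hx0]
  have hfsurj : Function.Surjective f := LinearMap.injective_iff_surjective.mp hfinj
  set F := LinearEquiv.ofBijective f ⟨hfinj, hfsurj⟩ with hFdef
  -- f maps V' into V'
  have hV'map : ∀ v ∈ V', f v ∈ V' := by
    intro v hv
    induction hv using Submodule.span_induction with
    | mem x h => exact Submodule.subset_span (hfL' x h)
    | zero => simp
    | add x y _ _ hx hy => rw [map_add]; exact add_mem hx hy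
    | smul a x _ hx => rw [map_smul]; exact Submodule.smul_mem _ _ hx
  -- f is surjective on V'
  have hV'surj : ∀ v ∈ V', ∃ u ∈ V', f u = v := by
    intro v hv
    induction hv using Submodule.span_induction with
    | mem x h =>
      obtain ⟨u, hu, hfu⟩ := hfL'surj x h
      exact ⟨u, Submodule.subset_span hu, hfu⟩
    | zero => exact ⟨0, zero_mem _, map_zero f⟩
    | add x y _ _ hx hy =>
      obtain ⟨u, hu, hfu⟩ := hx; obtain ⟨u', hu', hfu'⟩ := hy
      exact ⟨u + u', add_mem hu hu', by rw [map_add, hfu, hfu']⟩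
    | smul a x _ hx =>
      obtain ⟨u, hu, hfu⟩ := hx
      exact ⟨a • u, Submodule.smul_mem _ _ hu, by rw [map_smul, hfu]⟩
  -- the inverse maps V' into V'
  have hgV' : ∀ v ∈ V', F.symm v ∈ V' := by
    intro v hv
    obtain ⟨u, hu, hfu⟩ := hV'surj v hv
    have hFu : F u = v := hfu
    rw [← hFu, F.symm_apply_apply]; exact hu
  -- representation of elements of V' in the basis e'
  have hV'rep : ∀ v (hv : v ∈ V'),
      v = ∑ j, e'.repr ⟨v, hv⟩ j • ((e' j : Fin d → ℝ)) := by
    intro v hv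
    have h := congrArg (Subtype.val) (e'.sum_repr ⟨v, hv⟩)
    simpa only [Submodule.coe_sum, Submodule.coe_smul] using h.symm
  -- orthogonality to all e' j implies orthogonality to V'
  have horthV' : ∀ w : Fin d → ℝ, (∀ j, B (e' j) w = 0) → ∀ v ∈ V', B v w = 0 := by
    intro w hw v hv
    rw [hV'rep v hv, expand_left']
    exact Finset.sum_eq_zero fun j _ => by rw [hw j, mul_zero]
  -- nondegeneracy of B on V'
  have hndV' : ∀ v ∈ V', (∀ j, B (e' j) v = 0) → v = 0 := by
    intro v hv hw
    have hz : ∀ k, e'.repr ⟨v, hv⟩ k = 0 := by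
      intro k
      have h1 : B (e' k) v = e'.repr ⟨v, hv⟩ k * B (e' k) (e' k) := by
        conv_lhs => rw [hV'rep v hv]
        exact diag_right' B _ _ _ k (fun j hj => horth' k j (Ne.symm hj))
      rw [hw k] at h1
      exact (mul_eq_zero.mp h1.symm).resolve_right (hd' k)
    have h0 : (⟨v, hv⟩ : V') = 0 := by
      refine e'.ext_elem fun k => ?_
      simp [hz k]
    simpa using congrArg Subtype.val h0
  -- negative semidefiniteness on the orthogonal complement of e' 0
  have hnegsd : ∀ w : Fin d → ℝ, B (e' 0) w = 0 → B w w ≤ 0 := by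
    intro w hw
    by_contra hcon
    push_neg at hcon
    set u : Fin d → ℝ := (e' 0 : Fin d → ℝ) with hu
    have hwu : B w u = 0 := by rw [hsymm]; exact hw
    have hwne : w ≠ 0 := by
      intro h; rw [h] at hcon; simp at hcon
    have hli : LinearIndependent ℝ ![u, w] := by
      rw [LinearIndependent.pair_iff]
      intro s t hst
      have h1 : B u (s • u + t • w) = s * B u u := by
        simp [hw, mul_comm]
      rw [hst] at h1
      simp only [map_zero] at h1
      have hs : s = 0 := by
        rcases mul_eq_zero.mp h1.symm with h | h
        · exact h
        · exact absurd h (ne_of_gt hpos')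
      refine ⟨hs, ?_⟩
      rw [hs, zero_smul, zero_add] at hst
      rcases smul_eq_zero.mp hst with h | h
      · exact h
      · exact absurd h hwne
    set P : Submodule ℝ (Fin d → ℝ) := Submodule.span ℝ (Set.range ![u, w]) with hP
    set N : Submodule ℝ (Fin d → ℝ) :=
      Submodule.span ℝ (Set.range fun i : Fin n => e i.succ) with hN
    have hliN : LinearIndependent ℝ fun i : Fin n => e i.succ :=
      e.linearIndependent.comp Fin.succ (Fin.succ_injective n)
    have hPrank : Module.finrank ℝ P = 2 := by
      rw [hP, finrank_span_eq_card hli]; simp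
    have hNrank : Module.finrank ℝ N = n := by
      rw [hN, finrank_span_eq_card hliN]; simp
    have hpairorth : ∀ i j : Fin 2, i ≠ j → B (![u, w] i) (![u, w] j) = 0 := by
      intro i j hij
      fin_cases i <;> fin_cases j <;>
        simp only [Matrix.cons_val_zero, Matrix.cons_val_one, Matrix.head_cons,
          Fin.mk_zero, Fin.mk_one]
      · exact absurd rfl hij
      · exact hw
      · exact hwu
      · exact absurd rfl hij
    have hsuccorth : ∀ i j : Fin n, i ≠ j →
        B (e i.succ) (e j.succ) = 0 := by
      intro i j hij
      exact horth _ _ (fun h => hij (Fin.succ_injective n h))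
    have key : ∀ p, p ∈ P → p ∈ N → p = 0 := by
      intro p hpP hpN
      rw [hP, Submodule.mem_span_range_iff_exists_fun] at hpP
      rw [hN, Submodule.mem_span_range_iff_exists_fun] at hpN
      obtain ⟨c, hc⟩ := hpP
      obtain ⟨cN, hcN⟩ := hpN
      have hBpP : B p p = c 0 * c 0 * B u u + c 1 * c 1 * B w w := by
        rw [← hc, quad_sum' B c _ hpairorth, Fin.sum_univ_two]
        simp only [Matrix.cons_val_zero, Matrix.cons_val_one, Matrix.head_cons]
      have hBpN : B p p ≤ 0 := by
        rw [← hcN, quad_sum' B cN _ hsuccorth]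
        refine Finset.sum_nonpos fun i _ => ?_
        have hni := hneg i.succ (Fin.succ_ne_zero i)
        nlinarith [mul_self_nonneg (cN i)]
      have h1 : 0 ≤ c 0 * c 0 * B u u :=
        mul_nonneg (mul_self_nonneg _) (le_of_lt hpos')
      have h2 : 0 ≤ c 1 * c 1 * B w w :=
        mul_nonneg (mul_self_nonneg _) (le_of_lt hcon)
      have e1 : c 0 * c 0 * B u u = 0 := by linarith
      have e2 : c 1 * c 1 * B w w = 0 := by linarith
      have hc0 : c 0 = 0 :=
        mul_self_eq_zero.mp ((mul_eq_zero.mp e1).resolve_right (ne_of_gt hpos'))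
      have hc1 : c 1 = 0 :=
        mul_self_eq_zero.mp ((mul_eq_zero.mp e2).resolve_right (ne_of_gt hcon))
      rw [← hc, Fin.sum_univ_two]
      simp [hc0, hc1]
    have hdisj : P ⊓ N = ⊥ := by
      rw [eq_bot_iff]
      intro p hp
      rw [Submodule.mem_inf] at hp
      rw [Submodule.mem_bot]
      exact key p hp.1 hp.2
    have hfin := Submodule.finrank_sup_add_finrank_inf_eq P N
    rw [hdisj, hPrank, hNrank] at hfin
    have hle : Module.finrank ℝ ↥(P ⊔ N) ≤ Module.finrank ℝ (Fin d → ℝ) :=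
      Submodule.finrank_le _
    have hd1 : Module.finrank ℝ (Fin d → ℝ) = n + 1 := by
      rw [Module.finrank_eq_card_basis e]; simp
    rw [hd1] at hle
    rw [finrank_bot] at hfin
    omega
  -- the orthogonal projection onto V'
  set π : (Fin d → ℝ) →ₗ[ℝ] (Fin d → ℝ) :=
    ∑ i, (B (e' i) (e' i))⁻¹ • LinearMap.smulRight (B (e' i)) ((e' i : Fin d → ℝ)) with hπ
  have hπapp : ∀ x, π x = ∑ i, ((B (e' i) (e' i))⁻¹ * B (e' i) x) • ((e' i : Fin d → ℝ)) := by
    intro x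
    rw [hπ]
    simp [LinearMap.sum_apply, LinearMap.smul_apply, LinearMap.smulRight_apply, smul_smul]
  have hπmem : ∀ x, π x ∈ V' := by
    intro x
    rw [hπapp]
    exact Submodule.sum_mem _ fun i _ => Submodule.smul_mem _ _ (SetLike.coe_mem (e' i))
  have hπorth : ∀ x j, B (e' j) (x - π x) = 0 := by
    intro x j
    rw [map_sub]
    have h1 : B (e' j) (π x) = B (e' j) x := by
      rw [hπapp, diag_right' B _ _ _ j (fun i hi => horth' j i (Ne.symm hi))]
      rw [mul_comm, ← mul_assoc, mul_inv_cancel₀ (hd' j), one_mul]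
    rw [h1, sub_self]
  -- π commutes with f
  have hcomm : ∀ x, π (f x) = f (π x) := by
    intro x
    have hmem : π (f x) - f (π x) ∈ V' := sub_mem (hπmem _) (hV'map _ (hπmem x))
    refine sub_eq_zero.mp (hndV' _ hmem fun j => ?_)
    rw [map_sub]
    have h1 : B (e' j) (π (f x)) = B (e' j) (f x) := by
      have h := hπorth (f x) j
      rw [map_sub] at h
      linarith
    obtain ⟨uj, hujV, hujf⟩ := hV'surj _ (SetLike.coe_mem (e' j))
    have h2 : B (e' j) (f (π x)) = B (e' j) (f x) := by
      have huj : B uj (x - π x) = 0 := horthV' _ (hπorth x) uj hujV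
      rw [map_sub] at huj
      calc B (e' j) (f (π x)) = B (f uj) (f (π x)) := by rw [hujf]
        _ = B uj (π x) := hiso _ _
        _ = B uj x := by linarith
        _ = B (f uj) (f x) := (hiso _ _).symm
        _ = B (e' j) (f x) := by rw [hujf]
    rw [h1, h2, sub_self]
  -- π does not decrease the norm on the positive cone
  have hπpos : ∀ x, 0 < B x x → 0 < B (π x) (π x) := by
    intro x hx
    have hw0 : ∀ j, B (e' j) (x - π x) = 0 := hπorth x
    have hww : B (x - π x) (x - π x) ≤ 0 := hnegsd _ (hw0 0)
    have hπw : B (π x) (x - π x) = 0 := horthV' _ hw0 _ (hπmem x)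
    have hwπ : B (x - π x) (π x) = 0 := by rw [hsymm]; exact hπw
    have hxeq : π x + (x - π x) = x := by abel
    have hdec : B x x = B (π x) (π x) + B (π x) (x - π x) +
        (B (x - π x) (π x) + B (x - π x) (x - π x)) := by
      conv_lhs => rw [← hxeq]
      simp [map_add]
      ring
    rw [hπw, hwπ] at hdec
    linarith
  -- notation for the two chamber sets
  set S : Set (Fin d → ℝ) := {x | 0 < B x x ∧ ∀ r ∈ L, B r r = -2 → B r x ≠ 0} with hS
  set S' : Set (Fin d → ℝ) := {x : Fin d → ℝ | x ∈ Submodule.span ℝ (L' : Set (Fin d → ℝ)) ∧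
    0 < B x x ∧ ∀ r ∈ L', B r r = -2 → B r x ≠ 0} with hS'
  -- π maps S into S'
  have hπS' : ∀ z ∈ S, π z ∈ S' := by
    intro z hz
    obtain ⟨hz1, hz2⟩ := hz
    refine ⟨hπmem z, hπpos z hz1, fun r hr hrr => ?_⟩
    have hrV : (r : Fin d → ℝ) ∈ V' := Submodule.subset_span hr
    have h0 : B r (z - π z) = 0 := horthV' _ (hπorth z) r hrV
    rw [map_sub] at h0
    have hBr : B r (π z) = B r z := by linarith
    rw [hBr]
    exact hz2 r (hL'L hr) hrr
  -- f and its inverse preserve S'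
  have hfS' : ∀ x ∈ S', f x ∈ S' := by
    rintro x ⟨hxV, hxp, hxr⟩
    refine ⟨hV'map x hxV, by rw [hiso]; exact hxp, fun r hr hrr => ?_⟩
    obtain ⟨r', hr', hfr'⟩ := hfL'surj r hr
    rw [← hfr', hiso] at hrr ⊢
    exact hxr r' hr' hrr
  have hgS' : ∀ x ∈ S', F.symm x ∈ S' := by
    rintro x ⟨hxV, hxp, hxr⟩
    have hfg : f (F.symm x) = x := F.apply_symm_apply x
    refine ⟨hgV' x hxV, ?_, fun r hr hrr => ?_⟩
    · rw [← hiso (F.symm x) (F.symm x), hfg]; exact hxp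
    · have h1 : B r (F.symm x) = B (f r) x := by
        rw [← hiso r (F.symm x), hfg]
      rw [h1]
      exact hxr (f r) (hfL' r hr) (by rw [hiso]; exact hrr)
  -- continuity
  have hπcont : Continuous π := π.continuous_of_finiteDimensional
  have hfcont : Continuous f := f.continuous_of_finiteDimensional
  have hgcont : Continuous fun x => F.symm x :=
    (F.symm : (Fin d → ℝ) →ₗ[ℝ] (Fin d → ℝ)).continuous_of_finiteDimensional
  -- the main argument
  obtain ⟨y, hyS, hC⟩ := hpositive
  have hyC : y ∈ connectedComponentIn S y := mem_connectedComponentIn hyS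
  have hCS : connectedComponentIn S y ⊆ S := connectedComponentIn_subset _ _
  set x₀ : Fin d → ℝ := π y with hx₀
  have hx₀S' : x₀ ∈ S' := hπS' y hyS
  have hTsub : π '' connectedComponentIn S y ⊆ S' := by
    rintro _ ⟨z, hz, rfl⟩
    exact hπS' z (hCS hz)
  have hTpre : IsPreconnected (π '' connectedComponentIn S y) :=
    isPreconnected_connectedComponentIn.image _ hπcont.continuousOn
  have hx₀T : x₀ ∈ π '' connectedComponentIn S y := ⟨y, hyC, rfl⟩
  have hTc : π '' connectedComponentIn S y ⊆ connectedComponentIn S' x₀ :=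
    hTpre.subset_connectedComponentIn hx₀T hTsub
  have hfy : f y ∈ connectedComponentIn S y := by
    rw [← hC]; exact Set.mem_image_of_mem f hyC
  have hfx₀ : f x₀ ∈ connectedComponentIn S' x₀ := by
    have h : f x₀ = π (f y) := (hcomm y).symm
    rw [h]
    exact hTc ⟨f y, hfy, rfl⟩
  have hcS' : connectedComponentIn S' x₀ ⊆ S' := connectedComponentIn_subset _ _
  have hsub1 : f '' connectedComponentIn S' x₀ ⊆ connectedComponentIn S' x₀ := by
    have him : IsPreconnected (f '' connectedComponentIn S' x₀) :=
      isPreconnected_connectedComponentIn.image _ hfcont.continuousOn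
    have hsubS' : f '' connectedComponentIn S' x₀ ⊆ S' := by
      rintro _ ⟨z, hz, rfl⟩
      exact hfS' z (hcS' hz)
    have hmem : f x₀ ∈ f '' connectedComponentIn S' x₀ :=
      ⟨x₀, mem_connectedComponentIn hx₀S', rfl⟩
    have h := him.subset_connectedComponentIn hmem hsubS'
    rwa [← connectedComponentIn_eq hfx₀] at h
  have hsub2 : connectedComponentIn S' x₀ ⊆ f '' connectedComponentIn S' x₀ := by
    intro z hz
    have hgz : F.symm z ∈ connectedComponentIn S' x₀ := by
      have him : IsPreconnected ((fun x => F.symm x) '' connectedComponentIn S' x₀) :=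
        isPreconnected_connectedComponentIn.image _ hgcont.continuousOn
      have hsubS' : (fun x => F.symm x) '' connectedComponentIn S' x₀ ⊆ S' := by
        rintro _ ⟨z', hz', rfl⟩
        exact hgS' z' (hcS' hz')
      have hmem : x₀ ∈ (fun x => F.symm x) '' connectedComponentIn S' x₀ :=
        ⟨f x₀, hfx₀, F.symm_apply_apply x₀⟩
      exact him.subset_connectedComponentIn hmem hsubS' ⟨z, hz, rfl⟩
    exact ⟨F.symm z, hgz, F.apply_symm_apply z⟩
  exact ⟨x₀, hx₀S', Set.Subset.antisymm hsub1 hsub2⟩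
end

section
/- Let D(n) denote the minimum D ≥ 0 such that GL(D, ℤ) contains an element of order n (with D(1) = 0). Then D(2) = 1, and for even n > 2 with n/2 odd, D(n) = D(n/2); moreover for n = p₁^{m₁}⋯p_s^{m_s} with distinct primes p_i, if n is odd or 4 | n, then D(n) = Σ_i φ(p_i^{m_i}) where φ is Euler's totient function. -/
open Polynomial Matrix

section Aux


lemma exists_GL_orderOf_eq (k : ℕ) (hk : 0 < k) :
    ∃ g : GL (Fin (Nat.totient k)) ℤ, orderOf g = k := by
  classical
  set f : ℤ[X] := cyclotomic k ℤ with hf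
  have hm : f.Monic := cyclotomic.monic k ℤ
  have hdim : f.natDegree = Nat.totient k := natDegree_cyclotomic k ℤ
  -- basis
  let pb := AdjoinRoot.powerBasis' hm
  let B : Module.Basis (Fin (Nat.totient k)) ℤ (AdjoinRoot f) :=
    pb.basis.reindex (finCongr (by simpa [pb, AdjoinRoot.powerBasis'] using hdim))
  -- the root is a unit of order k
  have hrootpow : (AdjoinRoot.root f) ^ k = 1 := by
    have hdvd : f ∣ (X ^ k - 1 : ℤ[X]) := cyclotomic.dvd_X_pow_sub_one k ℤ
    have h0 : AdjoinRoot.mk f ((X : ℤ[X]) ^ k - 1) = 0 := by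
      rw [AdjoinRoot.mk_eq_zero]; exact hdvd
    have := h0
    rw [map_sub, map_pow, AdjoinRoot.mk_X, _root_.map_one, sub_eq_zero] at this
    exact this
  have hk1 : k - 1 + 1 = k := Nat.succ_pred_eq_of_pos hk
  let u : (AdjoinRoot f)ˣ :=
    { val := AdjoinRoot.root f
      inv := (AdjoinRoot.root f) ^ (k - 1)
      val_inv := by rw [← pow_succ', hk1]; exact hrootpow
      inv_val := by rw [← pow_succ, hk1]; exact hrootpow }
  have hu : orderOf u = k := by
    have hud : orderOf u ∣ k := orderOf_dvd_of_pow_eq_one (by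
      ext; exact hrootpow)
    -- map to ℂ
    have hζ : IsPrimitiveRoot (Complex.exp (2 * Real.pi * Complex.I / k)) k :=
      Complex.isPrimitiveRoot_exp k hk.ne'
    have hcz : f.eval₂ (Int.castRingHom ℂ) (Complex.exp (2 * Real.pi * Complex.I / k)) = 0 := by
      rw [eval₂_eq_eval_map, hf, map_cyclotomic]
      exact hζ.isRoot_cyclotomic hk
    set ψ := AdjoinRoot.lift (Int.castRingHom ℂ) _ hcz
    have hdu : k ∣ orderOf u := by
      apply hζ.dvd_of_pow_eq_one
      have : (u : AdjoinRoot f) ^ orderOf u = 1 := by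
        have := pow_orderOf_eq_one u
        exact congrArg Units.val this
      calc Complex.exp (2 * Real.pi * Complex.I / k) ^ orderOf u
          = ψ ((AdjoinRoot.root f) ^ orderOf u) := by rw [map_pow, AdjoinRoot.lift_root]
        _ = ψ 1 := by rw [this]
        _ = 1 := map_one ψ
    exact Nat.dvd_antisymm hud hdu
  -- transport to matrices
  let E := algEquivMatrix (R := ℤ) B
  let F : AdjoinRoot f →* Matrix (Fin (Nat.totient k)) (Fin (Nat.totient k)) ℤ :=
    (E.toRingEquiv.toRingHom.comp (Algebra.lmul ℤ (AdjoinRoot f)).toRingHom).toMonoidHom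
  have hFinj : Function.Injective F := by
    intro a b h
    exact Algebra.lmul_injective (E.injective h)
  refine ⟨Units.map F u, ?_⟩
  rw [orderOf_injective (Units.map F) (Units.map_injective hFinj) u, hu]


lemma sum_le_prod_of_two_le {α : Type*} (t : Finset α) (f : α → ℕ)
    (h : ∀ i ∈ t, 2 ≤ f i) : ∑ i ∈ t, f i ≤ ∏ i ∈ t, f i := by
  classical
  induction t using Finset.induction_on with
  | empty => simp
  | insert a s ha ih =>
    rw [Finset.sum_insert ha, Finset.prod_insert ha]
    have hs := ih (fun i hi => h i (Finset.mem_insert_of_mem hi))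
    have hfa : 2 ≤ f a := h a (Finset.mem_insert_self a s)
    rcases s.eq_empty_or_nonempty with rfl | ⟨b, hb⟩
    · simp
    · have hP : 2 ≤ ∏ i ∈ s, f i := by
        calc 2 ≤ f b := h b (Finset.mem_insert_of_mem hb)
        _ ≤ ∏ i ∈ s, f i := Finset.single_le_prod' (fun i hi => le_trans one_le_two (h i (Finset.mem_insert_of_mem hi))) hb
      nlinarith [hs, hfa, hP]

lemma nat_finset_prod_dvd {α : Type*} [DecidableEq α] (t : Finset α) (s : α → ℕ)
    (hco : ∀ p ∈ t, ∀ q ∈ t, p ≠ q → Nat.Coprime (s p) (s q)) {z : ℕ}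
    (hdvd : ∀ p ∈ t, s p ∣ z) : (∏ p ∈ t, s p) ∣ z := by
  classical
  induction t using Finset.induction_on with
  | empty => simp
  | insert a r ha ih =>
    rw [Finset.prod_insert ha]
    have hc : Nat.Coprime (s a) (∏ p ∈ r, s p) :=
      Nat.Coprime.prod_right fun q hq =>
        hco a (Finset.mem_insert_self a r) q (Finset.mem_insert_of_mem hq)
          (by rintro rfl; exact ha hq)
    exact hc.mul_dvd_of_dvd_of_dvd (hdvd a (Finset.mem_insert_self a r))
      (ih (fun p hp q hq h => hco p (Finset.mem_insert_of_mem hp) q (Finset.mem_insert_of_mem hq) h)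
        (fun p hp => hdvd p (Finset.mem_insert_of_mem hp)))

lemma totient_finset_prod (t : Finset ℕ) (e : ℕ → ℕ)
    (hco : ∀ p ∈ t, ∀ q ∈ t, p ≠ q → Nat.Coprime (e p) (e q)) :
    Nat.totient (∏ p ∈ t, e p) = ∏ p ∈ t, Nat.totient (e p) := by
  classical
  induction t using Finset.induction_on with
  | empty => simp
  | insert a s ha ih =>
    rw [Finset.prod_insert ha, Finset.prod_insert ha,
      Nat.totient_mul (Nat.Coprime.prod_right fun q hq =>
        hco a (Finset.mem_insert_self a s) q (Finset.mem_insert_of_mem hq)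
          (by rintro rfl; exact ha hq)),
      ih (fun p hp q hq h => hco p (Finset.mem_insert_of_mem hp) q (Finset.mem_insert_of_mem hq) h)]

lemma pow_dvd_elem_of_dvd_lcm {p k : ℕ} (hp : p.Prime) (hk : 0 < k) (S : Finset ℕ)
    (hS : ∀ d ∈ S, d ≠ 0) (h : p ^ k ∣ S.lcm id) : ∃ d ∈ S, p ^ k ∣ d := by
  classical
  induction S using Finset.induction_on with
  | empty =>
    simp only [Finset.lcm_empty, Nat.dvd_one] at h
    exact absurd h (by
      have := Nat.one_lt_pow hk.ne' hp.one_lt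
      omega)
  | insert a s ha ih =>
    rw [Finset.lcm_insert] at h
    have ha0 : a ≠ 0 := hS a (Finset.mem_insert_self a s)
    have hl0 : s.lcm id ≠ 0 := by
      simp only [Ne, Finset.lcm_eq_zero_iff, id]
      intro hmem
      exact hS 0 (Finset.mem_insert_of_mem (by simpa using hmem)) rfl
    have h' : p ^ k ∣ Nat.lcm a (s.lcm id) := h
    have : p ^ k ∣ a ∨ p ^ k ∣ s.lcm id := by
      rw [hp.pow_dvd_iff_le_factorization (Nat.lcm_ne_zero ha0 hl0)] at h'
      rw [Nat.factorization_lcm ha0 hl0] at h'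
      simp only [Finsupp.sup_apply, le_sup_iff] at h'
      rcases h' with h | h
      · exact Or.inl ((hp.pow_dvd_iff_le_factorization ha0).2 h)
      · exact Or.inr ((hp.pow_dvd_iff_le_factorization hl0).2 h)
    rcases this with h | h
    · exact ⟨a, Finset.mem_insert_self a s, h⟩
    · obtain ⟨d, hd, hdvd⟩ := ih (fun d hd => hS d (Finset.mem_insert_of_mem hd)) h
      exact ⟨d, Finset.mem_insert_of_mem hd, hdvd⟩

-- per-fiber bound
lemma fiber_bound {n d : ℕ} (hd : d ≠ 0) (T : Finset ℕ) (hT : T ⊆ n.primeFactors)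
    (hdvd : ∀ p ∈ T, p ^ n.factorization p ∣ d)
    (h2 : ∀ p ∈ T, 2 ≤ Nat.totient (p ^ n.factorization p)) :
    ∑ p ∈ T, Nat.totient (p ^ n.factorization p) ≤ Nat.totient d := by
  classical
  have hcop : ∀ p ∈ T, ∀ q ∈ T, p ≠ q →
      Nat.Coprime (p ^ n.factorization p) (q ^ n.factorization q) := fun p hp q hq hpq =>
    Nat.Coprime.pow _ _ ((Nat.coprime_primes (Nat.prime_of_mem_primeFactors (hT hp))
      (Nat.prime_of_mem_primeFactors (hT hq))).2 hpq)
  have hproddvd : (∏ p ∈ T, p ^ n.factorization p) ∣ d :=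
    nat_finset_prod_dvd T _ hcop hdvd
  calc ∑ p ∈ T, Nat.totient (p ^ n.factorization p)
      ≤ ∏ p ∈ T, Nat.totient (p ^ n.factorization p) :=
        sum_le_prod_of_two_le T _ h2
    _ = Nat.totient (∏ p ∈ T, p ^ n.factorization p) := (totient_finset_prod T _ hcop).symm
    _ ≤ Nat.totient d := Nat.le_of_dvd (Nat.totient_pos.2 (Nat.pos_of_ne_zero hd))
        (Nat.totient_dvd_of_dvd hproddvd)



-- Given a matrix over ℚ of "order n" exactly (A^k = 1 ↔ n ∣ k), get a set S of divisors
lemma matrix_order_bound {D n : ℕ} (hn : 0 < n) (A : Matrix (Fin D) (Fin D) ℚ)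
    (hord : ∀ k : ℕ, A ^ k = 1 ↔ n ∣ k) :
    ∃ S : Finset ℕ, S ⊆ n.divisors ∧ (∑ d ∈ S, Nat.totient d ≤ D) ∧
      ∀ p ∈ n.primeFactors, ∃ d ∈ S, p ^ n.factorization p ∣ d := by
  classical
  have hAn : A ^ n = 1 := (hord n).2 dvd_rfl
  set μ := minpoly ℚ A with hμ
  have hint : IsIntegral ℚ A :=
    ⟨X ^ n - 1, monic_X_pow_sub_C 1 hn.ne', by simp [hAn]⟩
  have hμ0 : μ ≠ 0 := minpoly.ne_zero hint
  have key : ∀ k : ℕ, μ ∣ X ^ k - 1 ↔ A ^ k = 1 := by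
    intro k
    constructor
    · rintro ⟨q, hq⟩
      have := minpoly.aeval ℚ A
      have h2 : aeval A ((X : ℚ[X]) ^ k - 1) = 0 := by
        rw [hq, _root_.map_mul, this, zero_mul]
      simpa [sub_eq_zero] using h2
    · intro h
      exact minpoly.dvd ℚ A (by simp [h])
  set S : Finset ℕ := n.divisors.filter (fun d => cyclotomic d ℚ ∣ μ) with hS
  have hSsub : S ⊆ n.divisors := Finset.filter_subset _ _
  -- pairwise coprime cyclotomics
  have hpair : ∀ (T : Finset ℕ), (↑T : Set ℕ).Pairwise (Function.onFun IsCoprime fun d => cyclotomic d ℚ) :=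
    fun T x _ y _ hxy => cyclotomic.isCoprime_rat hxy
  have hprodS : (∏ d ∈ S, cyclotomic d ℚ) ∣ μ :=
    Finset.prod_dvd_of_coprime (hpair S)
      (fun d hd => (Finset.mem_filter.1 hd).2)
  -- degree bound
  have hdeg : ∑ d ∈ S, Nat.totient d ≤ D := by
    have hμc : μ ∣ A.charpoly := A.minpoly_dvd_charpoly
    have hc0 : A.charpoly ≠ 0 := A.charpoly_monic.ne_zero
    have h1 : (∏ d ∈ S, cyclotomic d ℚ).natDegree ≤ A.charpoly.natDegree :=
      natDegree_le_of_dvd (hprodS.trans hμc) hc0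
    rwa [natDegree_prod _ _ (fun d hd => cyclotomic_ne_zero d ℚ),
      Matrix.charpoly_natDegree_eq_dim, Fintype.card_fin,
      Finset.sum_congr rfl (fun d _ => natDegree_cyclotomic d ℚ)] at h1
  refine ⟨S, hSsub, hdeg, ?_⟩
  -- μ divides the product over S
  have hμprod : μ ∣ ∏ d ∈ S, cyclotomic d ℚ := by
    have hXn : μ ∣ X ^ n - 1 := (key n).2 hAn
    rw [← prod_cyclotomic_eq_X_pow_sub_one hn ℚ] at hXn
    rw [← Finset.prod_filter_mul_prod_filter_not n.divisors
      (fun d => cyclotomic d ℚ ∣ μ) (fun d => cyclotomic d ℚ)] at hXn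
    have hcop : IsCoprime μ (∏ d ∈ n.divisors.filter (fun d => ¬ cyclotomic d ℚ ∣ μ),
        cyclotomic d ℚ) := by
      apply IsCoprime.prod_right
      intro d hd
      have hd' := Finset.mem_filter.1 hd
      have hdpos : 0 < d := Nat.pos_of_mem_divisors hd'.1
      exact ((cyclotomic.irreducible_rat hdpos).coprime_iff_not_dvd.2 hd'.2).symm
    exact hcop.dvd_of_dvd_mul_right hXn
  -- lcm argument
  intro p hp
  have hppow : p ^ n.factorization p ∣ S.lcm id := by
    have hL : A ^ (S.lcm id) = 1 := by
      rw [← key]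
      refine hμprod.trans (Finset.prod_dvd_of_coprime (hpair S) ?_)
      intro d hd
      have hddvd : d ∣ S.lcm id := Finset.dvd_lcm hd
      obtain ⟨c, hc⟩ := hddvd
      calc cyclotomic d ℚ ∣ X ^ d - 1 := cyclotomic.dvd_X_pow_sub_one d ℚ
        _ ∣ X ^ (S.lcm id) - 1 := by
            rw [hc, pow_mul]
            simpa using sub_dvd_pow_sub_pow ((X : ℚ[X]) ^ d) 1 c
    have hnL : n ∣ S.lcm id := (hord _).1 hL
    exact (Nat.ordProj_dvd n p).trans hnL
  have hS0 : ∀ d ∈ S, d ≠ 0 := fun d hd => (Nat.pos_of_mem_divisors (hSsub hd)).ne'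
  have hfpos : 0 < n.factorization p :=
    Nat.Prime.factorization_pos_of_dvd (Nat.prime_of_mem_primeFactors hp) hn.ne'
      (Nat.dvd_of_mem_primeFactors hp)
  exact pow_dvd_elem_of_dvd_lcm (Nat.prime_of_mem_primeFactors hp) hfpos S hS0 hppow




noncomputable def blockHom (a b : ℕ) :
    (Matrix (Fin a) (Fin a) ℤ × Matrix (Fin b) (Fin b) ℤ) →+*
      Matrix (Fin (a + b)) (Fin (a + b)) ℤ :=
  (Matrix.reindexAlgEquiv ℤ ℤ finSumFinEquiv).toRingEquiv.toRingHom.comp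
    { toFun := fun p => Matrix.fromBlocks p.1 0 0 p.2
      map_one' := by simp [Matrix.fromBlocks_one]
      map_mul' := fun p q => by
        simp [Matrix.fromBlocks_multiply]
      map_zero' := by simp
      map_add' := fun p q => by
        simp [Matrix.fromBlocks_add] }

lemma blockHom_injective (a b : ℕ) : Function.Injective (blockHom a b) := by
  intro p q h
  simp only [blockHom, RingHom.coe_comp, Function.comp_apply, RingHom.coe_mk, MonoidHom.coe_mk,
    OneHom.coe_mk, RingEquiv.coe_toRingHom, AlgEquiv.coe_ringEquiv] at h
  have h2 := (Matrix.reindexAlgEquiv ℤ ℤ finSumFinEquiv).injective h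
  have h11 := congrArg Matrix.toBlocks₁₁ h2
  have h22 := congrArg Matrix.toBlocks₂₂ h2
  simp [Matrix.toBlocks_fromBlocks₁₁, Matrix.toBlocks_fromBlocks₂₂] at h11 h22
  exact Prod.ext h11 h22

lemma exists_GL_mul {m n Dm Dn : ℕ} (hco : Nat.Coprime m n)
    (hm : ∃ g : GL (Fin Dm) ℤ, orderOf g = m) (hn : ∃ g : GL (Fin Dn) ℤ, orderOf g = n) :
    ∃ g : GL (Fin (Dm + Dn)) ℤ, orderOf g = m * n := by
  obtain ⟨g, hg⟩ := hm
  obtain ⟨h, hh⟩ := hn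
  let u : (Matrix (Fin Dm) (Fin Dm) ℤ × Matrix (Fin Dn) (Fin Dn) ℤ)ˣ :=
    (MulEquiv.prodUnits).symm (g, h)
  have hu : orderOf u = m * n := by
    have : u = (MulEquiv.prodUnits (M := Matrix (Fin Dm) (Fin Dm) ℤ)
        (N := Matrix (Fin Dn) (Fin Dn) ℤ)).symm.toMonoidHom (g, h) := rfl
    rw [this, orderOf_injective _ (MulEquiv.prodUnits).symm.injective (g, h),
      Prod.orderOf_mk, hg, hh, Nat.Coprime.lcm_eq_mul hco]
  refine ⟨Units.map (blockHom Dm Dn).toMonoidHom u, ?_⟩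
  rw [orderOf_injective _ (Units.map_injective (blockHom_injective Dm Dn)) u, hu]


lemma GL_cast {D D' n : ℕ} (h : D = D') (hg : ∃ g : GL (Fin D) ℤ, orderOf g = n) :
    ∃ g : GL (Fin D') ℤ, orderOf g = n := by subst h; exact hg

lemma exists_GL_finset_prod (t : Finset ℕ) (d : ℕ → ℕ) (hpos : ∀ p ∈ t, 0 < d p)
    (hco : ∀ p ∈ t, ∀ q ∈ t, p ≠ q → Nat.Coprime (d p) (d q)) :
    ∃ g : GL (Fin (∑ p ∈ t, Nat.totient (d p))) ℤ, orderOf g = ∏ p ∈ t, d p := by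
  classical
  induction t using Finset.induction_on with
  | empty => simpa using ⟨1, orderOf_one⟩
  | insert a s ha ih =>
    have h1 : ∃ g : GL (Fin (Nat.totient (d a))) ℤ, orderOf g = d a :=
      exists_GL_orderOf_eq _ (hpos a (Finset.mem_insert_self a s))
    have h2 := ih (fun p hp => hpos p (Finset.mem_insert_of_mem hp))
      (fun p hp q hq hpq => hco p (Finset.mem_insert_of_mem hp) q (Finset.mem_insert_of_mem hq) hpq)
    have hc : Nat.Coprime (d a) (∏ p ∈ s, d p) := by
      apply Nat.Coprime.prod_right
      intro q hq
      exact hco a (Finset.mem_insert_self a s) q (Finset.mem_insert_of_mem hq)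
        (by rintro rfl; exact ha hq)
    have := exists_GL_mul hc h1 h2
    rw [Finset.sum_insert ha, Finset.prod_insert ha]
    exact this

lemma exists_GL_of_pos {n : ℕ} (hn : 0 < n) :
    ∃ g : GL (Fin (∑ p ∈ n.primeFactors, Nat.totient (p ^ n.factorization p))) ℤ,
      orderOf g = n := by
  have hprod : ∏ p ∈ n.primeFactors, p ^ n.factorization p = n :=
    Nat.factorization_prod_pow_eq_self hn.ne'
  have := exists_GL_finset_prod n.primeFactors (fun p => p ^ n.factorization p)
    (fun p hp => pow_pos (Nat.pos_of_mem_primeFactors hp) _)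
    (fun p hp q hq hpq => Nat.Coprime.pow _ _
      ((Nat.coprime_primes (Nat.prime_of_mem_primeFactors hp)
        (Nat.prime_of_mem_primeFactors hq)).2 hpq))
  rw [hprod] at this
  exact this



lemma two_le_totient_ppow {n : ℕ} (hn : 0 < n) (hpar : Odd n ∨ 4 ∣ n) {p : ℕ}
    (hp : p ∈ n.primeFactors) : 2 ≤ Nat.totient (p ^ n.factorization p) := by
  have hpp := Nat.prime_of_mem_primeFactors hp
  have hm : 1 ≤ n.factorization p :=
    hpp.factorization_pos_of_dvd hn.ne' (Nat.dvd_of_mem_primeFactors hp)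
  rw [Nat.totient_prime_pow hpp hm]
  rcases eq_or_ne p 2 with rfl | hp2
  · have hm2 : 2 ≤ n.factorization 2 := by
      rcases hpar with hodd | h4
      · exact absurd (even_iff_two_dvd.2 (Nat.dvd_of_mem_primeFactors hp))
          (Nat.not_even_iff_odd.2 hodd)
      · have : (2 : ℕ) ^ 2 ∣ n := by norm_num; exact h4
        exact (Nat.Prime.pow_dvd_iff_le_factorization Nat.prime_two hn.ne').1 this
    calc 2 = 2 ^ 1 * 1 := by norm_num
    _ ≤ 2 ^ (n.factorization 2 - 1) * (2 - 1) := by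
        apply Nat.mul_le_mul
        · exact Nat.pow_le_pow_right (by norm_num) (by omega)
        · norm_num
  · have hp3 : 3 ≤ p := by
      rcases hpp.two_le.lt_or_eq with h | h
      · omega
      · omega
    calc 2 = 1 * 2 := by norm_num
    _ ≤ p ^ (n.factorization p - 1) * (p - 1) := by
        apply Nat.mul_le_mul
        · exact Nat.one_le_pow _ _ hpp.pos
        · omega

lemma lower_bound {n D : ℕ} (hn : 0 < n) (hpar : Odd n ∨ 4 ∣ n)
    (g : GL (Fin D) ℤ) (hg : orderOf g = n) :
    ∑ p ∈ n.primeFactors, Nat.totient (p ^ n.factorization p) ≤ D := by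
  classical
  -- the matrix over ℚ
  set φm : Matrix (Fin D) (Fin D) ℤ →+* Matrix (Fin D) (Fin D) ℚ :=
    (Int.castRingHom ℚ).mapMatrix with hφm
  have hφinj : Function.Injective φm := fun M N h => by
    ext i j
    have h2 : ((M i j : ℤ) : ℚ) = ((N i j : ℤ) : ℚ) := by
      have := congrFun (congrFun h i) j
      simpa [hφm, RingHom.mapMatrix_apply, Matrix.map_apply] using this
    exact_mod_cast h2
  set A : Matrix (Fin D) (Fin D) ℚ := φm (g : Matrix (Fin D) (Fin D) ℤ) with hA
  have hord : ∀ k : ℕ, A ^ k = 1 ↔ n ∣ k := by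
    intro k
    rw [← hg, orderOf_dvd_iff_pow_eq_one]
    constructor
    · intro h
      have : φm ((g : Matrix (Fin D) (Fin D) ℤ) ^ k) = φm 1 := by
        rw [map_pow, _root_.map_one]; exact h
      have h2 := hφinj this
      ext
      rw [Units.val_pow_eq_pow_val, h2, Units.val_one]
    · intro h
      have : ((g ^ k : GL (Fin D) ℤ) : Matrix (Fin D) (Fin D) ℤ) = 1 := by rw [h]; rfl
      rw [Units.val_pow_eq_pow_val] at this
      rw [hA, ← map_pow, this, _root_.map_one]
  obtain ⟨S, hSsub, hdeg, hmem⟩ := matrix_order_bound hn A hord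
  set F : ℕ → ℕ := fun p =>
    if h : ∃ d ∈ S, p ^ n.factorization p ∣ d then h.choose else 0 with hF
  have hFmem : ∀ p ∈ n.primeFactors, F p ∈ S := by
    intro p hp
    have h := hmem p hp
    simp only [hF, dif_pos h]
    exact h.choose_spec.1
  have hFdvd : ∀ p ∈ n.primeFactors, p ^ n.factorization p ∣ F p := by
    intro p hp
    have h := hmem p hp
    simp only [hF, dif_pos h]
    exact h.choose_spec.2
  calc ∑ p ∈ n.primeFactors, Nat.totient (p ^ n.factorization p)
      = ∑ d ∈ S, ∑ p ∈ n.primeFactors.filter (fun p => F p = d),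
          Nat.totient (p ^ n.factorization p) :=
        (Finset.sum_fiberwise_of_maps_to hFmem _).symm
    _ ≤ ∑ d ∈ S, Nat.totient d := by
        apply Finset.sum_le_sum
        intro d hd
        apply fiber_bound (Nat.pos_of_mem_divisors (hSsub hd)).ne'
          _ (Finset.filter_subset _ _)
        · intro p hp
          have hp' := Finset.mem_filter.1 hp
          have := hFdvd p hp'.1
          rwa [hp'.2] at this
        · intro p hp
          exact two_le_totient_ppow hn hpar (Finset.mem_filter.1 hp).1
    _ ≤ D := hdeg

end Aux

/-- `D n` is the minimum `D ≥ 0` such that `GL(D, ℤ)` contains an element of order `n`,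
i.e. the minimal rank of a free `ℤ`-module admitting an automorphism of exact order `n`. -/
noncomputable def minOrderRank (n : ℕ) : ℕ :=
  sInf {D : ℕ | ∃ g : GL (Fin D) ℤ, orderOf g = n}

section Main

lemma neg_one_ne_one_GL {D : ℕ} (hD : 0 < D) : (-1 : GL (Fin D) ℤ) ≠ 1 := by
  intro h
  have h2 : ((-1 : GL (Fin D) ℤ) : Matrix (Fin D) (Fin D) ℤ) = 1 := by rw [h]; rfl
  have h3 := congrFun (congrFun h2 ⟨0, hD⟩) ⟨0, hD⟩
  simp [Matrix.one_apply] at h3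

lemma orderOf_neg_one_GL {D : ℕ} (hD : 0 < D) : orderOf (-1 : GL (Fin D) ℤ) = 2 := by
  haveI : Fact (Nat.Prime 2) := ⟨Nat.prime_two⟩
  exact orderOf_eq_prime (by simp) (neg_one_ne_one_GL hD)

lemma GL_zero_orderOf (g : GL (Fin 0) ℤ) : orderOf g = 1 := by
  have : g = 1 := Subsingleton.elim g 1
  rw [this, orderOf_one]

lemma pos_dim_of_orderOf {D n : ℕ} (hn : 2 ≤ n) (g : GL (Fin D) ℤ) (hg : orderOf g = n) :
    0 < D := by
  by_contra h
  push_neg at h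
  interval_cases D
  rw [GL_zero_orderOf g] at hg
  omega

/-- With `D(n)` the minimal `D` such that `GL(D,ℤ)` has an element of
order `n` (so `D(1) = 0`): `D(2) = 1`; for even `n > 2` with `n/2` odd, `D(n) = D(n/2)`;
and if `n` is odd or divisible by `4`, then for the prime factorization
`n = p₁^{m₁}⋯p_s^{m_s}` one has `D(n) = Σ_i φ(p_i^{m_i})`. -/
theorem stmt19 :
    minOrderRank 1 = 0 ∧
    minOrderRank 2 = 1 ∧
    (∀ n : ℕ, 2 < n → Even n → Odd (n / 2) → minOrderRank n = minOrderRank (n / 2)) ∧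
    (∀ n : ℕ, 0 < n → (Odd n ∨ 4 ∣ n) →
      minOrderRank n = ∑ p ∈ n.primeFactors, Nat.totient (p ^ (n.factorization p))) := by
  refine ⟨?_, ?_, ?_, ?_⟩
  · -- D(1) = 0
    have h0 : (0 : ℕ) ∈ {D : ℕ | ∃ g : GL (Fin D) ℤ, orderOf g = 1} := ⟨1, orderOf_one⟩
    exact Nat.le_zero.1 (Nat.sInf_le h0)
  · -- D(2) = 1
    have h1 : (1 : ℕ) ∈ {D : ℕ | ∃ g : GL (Fin D) ℤ, orderOf g = 2} :=
      ⟨-1, orderOf_neg_one_GL one_pos⟩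
    have h0 : (0 : ℕ) ∉ {D : ℕ | ∃ g : GL (Fin D) ℤ, orderOf g = 2} := by
      rintro ⟨g, hg⟩
      rw [GL_zero_orderOf g] at hg
      omega
    have hle := Nat.sInf_le h1
    have hne : sInf {D : ℕ | ∃ g : GL (Fin D) ℤ, orderOf g = 2} ≠ 0 := by
      intro h
      rcases Nat.sInf_eq_zero.1 h with h | h
      · exact h0 h
      · rw [h] at h1; exact absurd h1 (Set.notMem_empty 1)
    exact Nat.le_antisymm hle (Nat.pos_of_ne_zero hne)
  · -- reduction for n ≡ 2 mod 4
    intro n hn he ho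
    have hset : {D : ℕ | ∃ g : GL (Fin D) ℤ, orderOf g = n} =
        {D : ℕ | ∃ g : GL (Fin D) ℤ, orderOf g = n / 2} := by
      ext D
      constructor
      · rintro ⟨g, hg⟩
        refine ⟨g ^ 2, ?_⟩
        rw [orderOf_pow' g (two_ne_zero), hg, Nat.gcd_eq_right (even_iff_two_dvd.1 he)]
      · rintro ⟨g, hg⟩
        have hn2 : 2 ≤ n / 2 := by have := Nat.even_iff.1 he; omega
        have hD : 0 < D := pos_dim_of_orderOf hn2 g hg
        refine ⟨-g, ?_⟩
        have hcomm : Commute (-1 : GL (Fin D) ℤ) g := by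
          unfold Commute SemiconjBy
          simp
        have hco : Nat.Coprime (orderOf (-1 : GL (Fin D) ℤ)) (orderOf g) := by
          rw [orderOf_neg_one_GL hD, hg, Nat.coprime_two_left]
          exact ho
        have := hcomm.orderOf_mul_eq_mul_orderOf_of_coprime hco
        rw [orderOf_neg_one_GL hD, hg] at this
        have hmul : (-1 : GL (Fin D) ℤ) * g = -g := by simp
        rw [hmul] at this
        rw [this, Nat.two_mul_div_two_of_even he]
    rw [minOrderRank, minOrderRank, hset]
  · -- the main formula
    intro n hn hpar
    have hup := exists_GL_of_pos hn
    apply le_antisymm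
    · exact Nat.sInf_le hup
    · have hne : {D : ℕ | ∃ g : GL (Fin D) ℤ, orderOf g = n}.Nonempty :=
        ⟨∑ p ∈ n.primeFactors, Nat.totient (p ^ n.factorization p), hup⟩
      apply le_csInf hne
      intro D hD
      obtain ⟨g, hg⟩ := hD
      exact lower_bound hn hpar g hg

end Main
end
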